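/- arXiv:1812.04790 — 6 statements merged into one kernel-verified Lean document; each statement's English description precedes it below -/
import Mathlib

section
/- Fix y_0 ∈ Y. If (T_i) is a sequence of positive integers with T_i → ∞ and γ_i ∈ Γ_{T_i}(y_0) are occupational measures converging in the weak* sense to γ ∈ P(G), then γ ∈ W_2(y_0). In particular, since Γ_T(y_0) ≠ ∅ for every T, the set W_2(y_0) is nonempty. -/
open MeasureTheory Filter Topology Set

noncomputable section

variable {m : ℕ} {U₀ : Type*} [MetricSpace U₀] [CompactSpace U₀]
  [MeasurableSpace U₀] [BorelSpace U₀]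

/-- The set `G = {(y,u) : y ∈ Y, u ∈ U y, f (y,u) ∈ Y}`. -/
def Gset (Y : Set (Fin m → ℝ)) (U : (Fin m → ℝ) → Set U₀)
    (f : (Fin m → ℝ) × U₀ → (Fin m → ℝ)) : Set ((Fin m → ℝ) × U₀) :=
  {p | p.1 ∈ Y ∧ p.2 ∈ U p.1 ∧ f p ∈ Y}

/-- Admissible process from the initial condition `y₀`. -/
def Admissible (Y : Set (Fin m → ℝ)) (U : (Fin m → ℝ) → Set U₀)
    (f : (Fin m → ℝ) × U₀ → (Fin m → ℝ)) (y₀ : Fin m → ℝ)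
    (y : ℕ → (Fin m → ℝ)) (u : ℕ → U₀) : Prop :=
  y 0 = y₀ ∧ ∀ t : ℕ, u t ∈ U (y t) ∧ y t ∈ Y ∧ y (t + 1) = f (y t, u t)

/-- Admissible process without a prescribed initial condition. -/
def AdmissibleProc (Y : Set (Fin m → ℝ)) (U : (Fin m → ℝ) → Set U₀)
    (f : (Fin m → ℝ) × U₀ → (Fin m → ℝ))
    (y : ℕ → (Fin m → ℝ)) (u : ℕ → U₀) : Prop :=
  ∀ t : ℕ, u t ∈ U (y t) ∧ y t ∈ Y ∧ y (t + 1) = f (y t, u t)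

/-- The finite-horizon value function `V_T(y₀)`. -/
def VT (Y : Set (Fin m → ℝ)) (U : (Fin m → ℝ) → Set U₀)
    (f : (Fin m → ℝ) × U₀ → (Fin m → ℝ)) (k : (Fin m → ℝ) × U₀ → ℝ)
    (T : ℕ) (y₀ : Fin m → ℝ) : ℝ :=
  sInf {c | ∃ y u, Admissible Y U f y₀ y u ∧
    c = (∑ t ∈ Finset.range T, k (y t, u t)) / (T : ℝ)}

/-- The discounted value function `h_α(y₀)`. -/
def hdisc (Y : Set (Fin m → ℝ)) (U : (Fin m → ℝ) → Set U₀)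
    (f : (Fin m → ℝ) × U₀ → (Fin m → ℝ)) (k : (Fin m → ℝ) × U₀ → ℝ)
    (α : ℝ) (y₀ : Fin m → ℝ) : ℝ :=
  (1 - α) * sInf {c | ∃ y u, Admissible Y U f y₀ y u ∧
    c = ∑' t : ℕ, α ^ t * k (y t, u t)}

/-- The set `W` of probability measures on `G` with zero drift. -/
def Wset (Y : Set (Fin m → ℝ)) (U : (Fin m → ℝ) → Set U₀)
    (f : (Fin m → ℝ) × U₀ → (Fin m → ℝ)) :
    Set (Measure ((Fin m → ℝ) × U₀)) :=
  {γ | IsProbabilityMeasure γ ∧ γ (Gset Y U f)ᶜ = 0 ∧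
    ∀ φ : (Fin m → ℝ) → ℝ, ContinuousOn φ Y →
      ∫ p, (φ (f p) - φ p.1) ∂γ = 0}

/-- The set `W₁(y₀)`. -/
def W1set (Y : Set (Fin m → ℝ)) (U : (Fin m → ℝ) → Set U₀)
    (f : (Fin m → ℝ) × U₀ → (Fin m → ℝ)) (y₀ : Fin m → ℝ) :
    Set (Measure ((Fin m → ℝ) × U₀)) :=
  {γ | γ ∈ Wset Y U f ∧ ∃ ξ : Measure ((Fin m → ℝ) × U₀),
    IsFiniteMeasure ξ ∧ ξ (Gset Y U f)ᶜ = 0 ∧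
    ∀ φ : (Fin m → ℝ) → ℝ, ContinuousOn φ Y →
      ∫ p, (φ p.1 - φ y₀) ∂γ = ∫ p, (φ (f p) - φ p.1) ∂ξ}

/-- The set `W₂(y₀)`. -/
def W2set (Y : Set (Fin m → ℝ)) (U : (Fin m → ℝ) → Set U₀)
    (f : (Fin m → ℝ) × U₀ → (Fin m → ℝ)) (y₀ : Fin m → ℝ) :
    Set (Measure ((Fin m → ℝ) × U₀)) :=
  {γ | γ ∈ Wset Y U f ∧ ∃ ξ : ℕ → Measure ((Fin m → ℝ) × U₀),
    (∀ i, IsFiniteMeasure (ξ i) ∧ (ξ i) (Gset Y U f)ᶜ = 0) ∧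
    ∀ φ : (Fin m → ℝ) → ℝ, ContinuousOn φ Y →
      Tendsto (fun i => ∫ p, (φ (f p) - φ p.1) ∂(ξ i)) atTop
        (𝓝 (∫ p, (φ p.1 - φ y₀) ∂γ))}

/-- The optimal value `d*(y₀)` of the dual IDLP problem. -/
def dstar (Y : Set (Fin m → ℝ)) (U : (Fin m → ℝ) → Set U₀)
    (f : (Fin m → ℝ) × U₀ → (Fin m → ℝ)) (k : (Fin m → ℝ) × U₀ → ℝ)
    (y₀ : Fin m → ℝ) : ℝ :=
  sSup {μ : ℝ | ∃ ψ η : (Fin m → ℝ) → ℝ, ContinuousOn ψ Y ∧ ContinuousOn η Y ∧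
    ∀ p ∈ Gset Y U f,
      0 ≤ k p + (ψ y₀ - ψ p.1) + η (f p) - η p.1 - μ ∧
      0 ≤ ψ (f p) - ψ p.1}

/-- The optimal value `k*(y₀)` of the primal IDLP problem. -/
def kstar (Y : Set (Fin m → ℝ)) (U : (Fin m → ℝ) → Set U₀)
    (f : (Fin m → ℝ) × U₀ → (Fin m → ℝ)) (k : (Fin m → ℝ) × U₀ → ℝ)
    (y₀ : Fin m → ℝ) : ℝ :=
  sInf {c | ∃ γ ξ : Measure ((Fin m → ℝ) × U₀),
    γ ∈ Wset Y U f ∧ IsFiniteMeasure ξ ∧ ξ (Gset Y U f)ᶜ = 0 ∧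
    (∀ φ : (Fin m → ℝ) → ℝ, ContinuousOn φ Y →
      ∫ p, (φ y₀ - φ p.1) ∂γ + ∫ p, (φ (f p) - φ p.1) ∂ξ = 0) ∧
    c = ∫ p, k p ∂γ}

/-- Occupational measure of a process over `{0, …, T-1}`. -/
def occMeas (y : ℕ → (Fin m → ℝ)) (u : ℕ → U₀) (T : ℕ) :
    Measure ((Fin m → ℝ) × U₀) :=
  (T : ENNReal)⁻¹ • ∑ t ∈ Finset.range T, Measure.dirac (y t, u t)

/-- Discounted occupational measure of a process. -/
def discMeas (α : ℝ) (y : ℕ → (Fin m → ℝ)) (u : ℕ → U₀) :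
    Measure ((Fin m → ℝ) × U₀) :=
  Measure.sum fun t : ℕ =>
    ENNReal.ofReal ((1 - α) * α ^ t) • Measure.dirac (y t, u t)

/-- The set `Γ_T(y₀)` of occupational measures. -/
def GammaT (Y : Set (Fin m → ℝ)) (U : (Fin m → ℝ) → Set U₀)
    (f : (Fin m → ℝ) × U₀ → (Fin m → ℝ)) (y₀ : Fin m → ℝ) (T : ℕ) :
    Set (Measure ((Fin m → ℝ) × U₀)) :=
  {γ | ∃ y u, Admissible Y U f y₀ y u ∧ γ = occMeas y u T}

/-- The set `Θ_α(y₀)` of discounted occupational measures. -/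
def Theta (Y : Set (Fin m → ℝ)) (U : (Fin m → ℝ) → Set U₀)
    (f : (Fin m → ℝ) × U₀ → (Fin m → ℝ)) (α : ℝ) (y₀ : Fin m → ℝ) :
    Set (Measure ((Fin m → ℝ) × U₀)) :=
  {γ | ∃ y u, Admissible Y U f y₀ y u ∧ γ = discMeas α y u}

/-- Weak* convergence of a sequence of measures (tested against functions
continuous on `G`). -/
def WeakStarTendstoOn (G : Set ((Fin m → ℝ) × U₀))
    (γs : ℕ → Measure ((Fin m → ℝ) × U₀))
    (γ : Measure ((Fin m → ℝ) × U₀)) : Prop :=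
  ∀ q : (Fin m → ℝ) × U₀ → ℝ, ContinuousOn q G →
    Tendsto (fun i => ∫ p, q p ∂(γs i)) atTop (𝓝 (∫ p, q p ∂γ))

/-- A `T`-periodic process. -/
def PeriodicProc (y : ℕ → (Fin m → ℝ)) (u : ℕ → U₀) (T : ℕ) : Prop :=
  ∀ t : ℕ, y (t + T) = y t ∧ u (t + T) = u t

/-- The point `z` is finite-time reachable from `y₀`. -/
def FTReachable (Y : Set (Fin m → ℝ)) (U : (Fin m → ℝ) → Set U₀)
    (f : (Fin m → ℝ) × U₀ → (Fin m → ℝ)) (y₀ z : Fin m → ℝ) : Prop :=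
  ∃ (tb : ℕ) (ty : ℕ → (Fin m → ℝ)) (tu : ℕ → U₀),
    Admissible Y U f y₀ ty tu ∧ ty tb = z

/-- The set `Γ_per(y₀)` of occupational measures of periodic processes
finite-time reachable from `y₀`. -/
def GammaPer (Y : Set (Fin m → ℝ)) (U : (Fin m → ℝ) → Set U₀)
    (f : (Fin m → ℝ) × U₀ → (Fin m → ℝ)) (y₀ : Fin m → ℝ) :
    Set (Measure ((Fin m → ℝ) × U₀)) :=
  {γ | ∃ (T : ℕ) (y : ℕ → (Fin m → ℝ)) (u : ℕ → U₀), 1 ≤ T ∧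
    AdmissibleProc Y U f y u ∧ PeriodicProc y u T ∧
    FTReachable Y U f y₀ (y 0) ∧ γ = occMeas y u T}

/-- The optimal value `V_per(y₀)` over periodic regimes. -/
def Vper (Y : Set (Fin m → ℝ)) (U : (Fin m → ℝ) → Set U₀)
    (f : (Fin m → ℝ) × U₀ → (Fin m → ℝ)) (k : (Fin m → ℝ) × U₀ → ℝ)
    (y₀ : Fin m → ℝ) : ℝ :=
  sInf {c | ∃ (T : ℕ) (y : ℕ → (Fin m → ℝ)) (u : ℕ → U₀), 1 ≤ T ∧
    AdmissibleProc Y U f y u ∧ PeriodicProc y u T ∧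
    FTReachable Y U f y₀ (y 0) ∧
    c = (∑ t ∈ Finset.range T, k (y t, u t)) / (T : ℝ)}

/-- The set `K` of continuous functions used in the alternative
representation of the limit optimal values. -/
def Kcal (Y : Set (Fin m → ℝ)) (U : (Fin m → ℝ) → Set U₀)
    (f : (Fin m → ℝ) × U₀ → (Fin m → ℝ)) (k : (Fin m → ℝ) × U₀ → ℝ) :
    Set ((Fin m → ℝ) → ℝ) :=
  {w | ContinuousOn w Y ∧ (∀ p ∈ Gset Y U f, w p.1 ≤ w (f p)) ∧
    ∀ γ ∈ Wset Y U f, ∫ p, w p.1 ∂γ ≤ ∫ p, k p ∂γ}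

/-- The optimal value `d*(θ, y₀)` of the perturbed dual problem. -/
def dstarTheta (Y : Set (Fin m → ℝ)) (U : (Fin m → ℝ) → Set U₀)
    (f : (Fin m → ℝ) × U₀ → (Fin m → ℝ)) (k : (Fin m → ℝ) × U₀ → ℝ)
    (θ : ℝ) (y₀ : Fin m → ℝ) : ℝ :=
  sSup {μ : ℝ | ∃ ψ η : (Fin m → ℝ) → ℝ, ContinuousOn ψ Y ∧ ContinuousOn η Y ∧
    ∀ p ∈ Gset Y U f,
      0 ≤ k p + (ψ y₀ - ψ p.1) + η (f p) - η p.1 - μ ∧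
      -θ ≤ ψ (f p) - ψ p.1}

/-- The optimal value `d̄*(θ, y₀)` of the perturbed dual problem in the
`ψ(y₀)` form. -/
def dbarTheta (Y : Set (Fin m → ℝ)) (U : (Fin m → ℝ) → Set U₀)
    (f : (Fin m → ℝ) × U₀ → (Fin m → ℝ)) (k : (Fin m → ℝ) × U₀ → ℝ)
    (θ : ℝ) (y₀ : Fin m → ℝ) : ℝ :=
  sSup {c : ℝ | ∃ ψ η : (Fin m → ℝ) → ℝ, ContinuousOn ψ Y ∧ ContinuousOn η Y ∧
    (∀ p ∈ Gset Y U f,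
      0 ≤ k p - ψ p.1 + η (f p) - η p.1 ∧
      -θ ≤ ψ (f p) - ψ p.1) ∧ c = ψ y₀}

/-- The optimal value `k*(θ, y₀)` of the perturbed primal problem. -/
def kstarTheta (Y : Set (Fin m → ℝ)) (U : (Fin m → ℝ) → Set U₀)
    (f : (Fin m → ℝ) × U₀ → (Fin m → ℝ)) (k : (Fin m → ℝ) × U₀ → ℝ)
    (θ : ℝ) (y₀ : Fin m → ℝ) : ℝ :=
  sInf {c | ∃ γ ξ : Measure ((Fin m → ℝ) × U₀),
    γ ∈ Wset Y U f ∧ IsFiniteMeasure ξ ∧ ξ (Gset Y U f)ᶜ = 0 ∧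
    (∀ φ : (Fin m → ℝ) → ℝ, ContinuousOn φ Y →
      ∫ p, (φ y₀ - φ p.1) ∂γ + ∫ p, (φ (f p) - φ p.1) ∂ξ = 0) ∧
    c = ∫ p, k p ∂γ + θ * (ξ Set.univ).toReal}

lemma integral_smul_sum_dirac {α ι : Type*} [MeasurableSpace α]
    [MeasurableSingletonClass α] (c : ENNReal) (s : Finset ι) (a : ι → α)
    (q : α → ℝ) :
    ∫ p, q p ∂(c • ∑ t ∈ s, Measure.dirac (a t)) = c.toReal * ∑ t ∈ s, q (a t) := by
  have h : ∀ t ∈ s, Integrable q (Measure.dirac (a t)) := fun t _ =>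
    (integrable_const (q (a t))).congr (ae_eq_dirac q).symm
  rw [integral_smul_measure, integral_finset_sum_measure h, smul_eq_mul]
  simp [integral_dirac]

theorem stmt_0
    (Y : Set (Fin m → ℝ)) (hYne : Y.Nonempty) (hYcomp : IsCompact Y)
    (U : (Fin m → ℝ) → Set U₀)
    (hUne : ∀ y ∈ Y, (U y).Nonempty) (hUcomp : ∀ y ∈ Y, IsCompact (U y))
    (hUgraph : IsClosed {p : (Fin m → ℝ) × U₀ | p.1 ∈ Y ∧ p.2 ∈ U p.1})
    (f : (Fin m → ℝ) × U₀ → (Fin m → ℝ)) (hf : Continuous f)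
    (k : (Fin m → ℝ) × U₀ → ℝ) (hk : Continuous k)
    (hA : ∀ y ∈ Y, ∃ u ∈ U y, f (y, u) ∈ Y)
    (y₀ : Fin m → ℝ) (hy₀ : y₀ ∈ Y)
    (Ti : ℕ → ℕ) (hTpos : ∀ i, 1 ≤ Ti i) (hTi : Tendsto Ti atTop atTop)
    (γi : ℕ → Measure ((Fin m → ℝ) × U₀))
    (hγi : ∀ i, γi i ∈ GammaT Y U f y₀ (Ti i))
    (γ : Measure ((Fin m → ℝ) × U₀))
    (hγP : IsProbabilityMeasure γ) (hγG : γ (Gset Y U f)ᶜ = 0)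
    (hconv : WeakStarTendstoOn (Gset Y U f) γi γ) :
    γ ∈ W2set Y U f y₀ ∧ (W2set Y U f y₀).Nonempty := by
  classical
  have key : γ ∈ W2set Y U f y₀ := by
    choose yp up hadm hocc using hγi
    have hy0 : ∀ i, yp i 0 = y₀ := fun i => (hadm i).1
    have hstep : ∀ i t, yp i (t + 1) = f (yp i t, up i t) := fun i t => ((hadm i).2 t).2.2
    have hmemY : ∀ i t, yp i t ∈ Y := fun i t => ((hadm i).2 t).2.1
    have hmemG : ∀ i t, (yp i t, up i t) ∈ Gset Y U f := by
      intro i t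
      refine ⟨hmemY i t, ((hadm i).2 t).1, ?_⟩
      rw [show f (yp i t, up i t) = yp i (t + 1) from (hstep i t).symm]
      exact hmemY i (t + 1)
    have hintγ : ∀ (i : ℕ) (q : (Fin m → ℝ) × U₀ → ℝ),
        ∫ p, q p ∂(γi i)
          = ((Ti i : ℝ))⁻¹ * ∑ t ∈ Finset.range (Ti i), q (yp i t, up i t) := by
      intro i q
      rw [hocc i]
      unfold occMeas
      rw [integral_smul_sum_dirac ((Ti i : ENNReal))⁻¹ (Finset.range (Ti i))
        (fun t => (yp i t, up i t)) q]
      congr 1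
      simp [ENNReal.toReal_inv]
    set S : ℕ → Finset ((_ : ℕ) × ℕ) :=
      fun i => (Finset.range (Ti i)).sigma fun t => Finset.range t with hS
    set ξ : ℕ → Measure ((Fin m → ℝ) × U₀) := fun i =>
      (Ti i : ENNReal)⁻¹ • ∑ x ∈ S i, Measure.dirac (yp i x.2, up i x.2) with hξ
    have hξfin : ∀ i, IsFiniteMeasure (ξ i) := by
      intro i
      constructor
      have huniv : (ξ i) Set.univ
          = (Ti i : ENNReal)⁻¹ * ((S i).card : ENNReal) := by
        rw [hξ]
        simp [Measure.smul_apply, Measure.finset_sum_apply, Measure.dirac_apply]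
      rw [huniv]
      exact ENNReal.mul_lt_top (ENNReal.inv_lt_top.mpr
        (by exact_mod_cast Nat.pos_of_ne_zero (Nat.one_le_iff_ne_zero.mp (hTpos i))))
        (ENNReal.natCast_lt_top _)
    have hξnull : ∀ i, (ξ i) (Gset Y U f)ᶜ = 0 := by
      intro i
      rw [hξ]
      simp only [Measure.smul_apply, Measure.finset_sum_apply]
      have hz : ∀ x ∈ S i,
          Measure.dirac ((yp i x.2, up i x.2)) (Gset Y U f)ᶜ = 0 := by
        intro x _
        rw [Measure.dirac_apply, Set.indicator_of_notMem]
        simp only [Set.mem_compl_iff, not_not]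
        exact hmemG i x.2
      rw [Finset.sum_eq_zero hz, smul_zero]
    have hintξ : ∀ (i : ℕ) (q : (Fin m → ℝ) × U₀ → ℝ),
        ∫ p, q p ∂(ξ i)
          = ((Ti i : ℝ))⁻¹ * ∑ x ∈ S i, q (yp i x.2, up i x.2) := by
      intro i q
      rw [hξ]
      rw [integral_smul_sum_dirac ((Ti i : ENNReal))⁻¹ (S i)
        (fun x => (yp i x.2, up i x.2)) q]
      congr 1
      simp [ENNReal.toReal_inv]
    have hdrift : ∀ φ : (Fin m → ℝ) → ℝ, ContinuousOn φ Y →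
        ∫ p, (φ (f p) - φ p.1) ∂γ = 0 := by
      intro φ hφ
      have hq : ContinuousOn (fun p : (Fin m → ℝ) × U₀ => φ (f p) - φ p.1)
          (Gset Y U f) := by
        exact (hφ.comp hf.continuousOn fun p hp => hp.2.2).sub
          (hφ.comp continuous_fst.continuousOn fun p hp => hp.1)
      obtain ⟨C, hC⟩ := hYcomp.exists_bound_of_continuousOn hφ
      have hval : ∀ i, ∫ p, (φ (f p) - φ p.1) ∂(γi i)
          = ((Ti i : ℝ))⁻¹ * (φ (yp i (Ti i)) - φ y₀) := by
        intro i
        rw [hintγ i]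
        congr 1
        have : ∀ t, φ (f (yp i t, up i t)) - φ (yp i t)
            = φ (yp i (t + 1)) - φ (yp i t) := by
          intro t; rw [← hstep i t]
        calc ∑ t ∈ Finset.range (Ti i), (φ (f (yp i t, up i t)) - φ (yp i t))
            = ∑ t ∈ Finset.range (Ti i), (φ (yp i (t + 1)) - φ (yp i t)) := by
              exact Finset.sum_congr rfl fun t _ => this t
          _ = φ (yp i (Ti i)) - φ (yp i 0) :=
              Finset.sum_range_sub (fun t => φ (yp i t)) (Ti i)
          _ = φ (yp i (Ti i)) - φ y₀ := by rw [hy0 i]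
      have hbound : ∀ i, ‖∫ p, (φ (f p) - φ p.1) ∂(γi i)‖ ≤ (2 * C) / (Ti i : ℝ) := by
        intro i
        rw [hval i, Real.norm_eq_abs, abs_mul, abs_inv,
          abs_of_nonneg (Nat.cast_nonneg _), div_eq_inv_mul]
        refine mul_le_mul_of_nonneg_left ?_ (inv_nonneg.mpr (Nat.cast_nonneg _))
        calc |φ (yp i (Ti i)) - φ y₀| = ‖φ (yp i (Ti i)) - φ y₀‖ :=
              (Real.norm_eq_abs _).symm
          _ ≤ ‖φ (yp i (Ti i))‖ + ‖φ y₀‖ := norm_sub_le _ _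
          _ ≤ C + C := add_le_add (hC _ (hmemY i (Ti i))) (hC _ hy₀)
          _ = 2 * C := by ring
      have h0 : Tendsto (fun i => ∫ p, (φ (f p) - φ p.1) ∂(γi i)) atTop (𝓝 0) :=
        squeeze_zero_norm hbound
          ((tendsto_const_div_atTop_nhds_zero_nat (2 * C)).comp hTi)
      exact tendsto_nhds_unique (hconv _ hq) h0
    refine ⟨⟨hγP, hγG, hdrift⟩, ξ, fun i => ⟨hξfin i, hξnull i⟩, ?_⟩
    intro φ hφ
    have hq' : ContinuousOn (fun p : (Fin m → ℝ) × U₀ => φ p.1 - φ y₀)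
        (Gset Y U f) :=
      (hφ.comp continuous_fst.continuousOn fun p hp => hp.1).sub continuousOn_const
    have hval : ∀ i, ∫ p, (φ (f p) - φ p.1) ∂(ξ i)
        = ∫ p, (φ p.1 - φ y₀) ∂(γi i) := by
      intro i
      rw [hintξ i, hintγ i]
      congr 1
      rw [hS, Finset.sum_sigma]
      refine Finset.sum_congr rfl fun t _ => ?_
      have : ∀ s, φ (f (yp i s, up i s)) - φ (yp i s)
          = φ (yp i (s + 1)) - φ (yp i s) := fun s => by rw [← hstep i s]
      calc ∑ s ∈ Finset.range t, (φ (f (yp i s, up i s)) - φ (yp i s))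
          = ∑ s ∈ Finset.range t, (φ (yp i (s + 1)) - φ (yp i s)) :=
            Finset.sum_congr rfl fun s _ => this s
        _ = φ (yp i t) - φ (yp i 0) := Finset.sum_range_sub (fun s => φ (yp i s)) t
        _ = φ (yp i t) - φ y₀ := by rw [hy0 i]
    have := hconv _ hq'
    simpa only [hval] using this
  exact ⟨key, ⟨γ, key⟩⟩
end
end

section
/- Fix y_0 ∈ Y. If (α_i) is a sequence in (0,1) with α_i ↑ 1 and γ_i ∈ Θ_{α_i}(y_0) are discounted occupational measures converging in the weak* sense to γ ∈ P(G), then γ ∈ W_2(y_0). -/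
open MeasureTheory Filter Topology Set

noncomputable section

variable {m : ℕ} {U₀ : Type*} [MetricSpace U₀] [CompactSpace U₀]
  [MeasurableSpace U₀] [BorelSpace U₀]

lemma countable_indicator_measurable {X : Type*} [MeasurableSpace X]
    [MeasurableSingletonClass X] {S : Set X} (hS : S.Countable) (q : X → ℝ) :
    Measurable (S.indicator q) := by
  intro A hA
  by_cases h0 : (0:ℝ) ∈ A
  · have he : S.indicator q ⁻¹' A = (S ∩ {x | q x ∈ A}) ∪ Sᶜ := by
      ext x
      by_cases hx : x ∈ S <;>
        simp [Set.indicator_of_mem, Set.indicator_of_notMem, hx, h0]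
    rw [he]
    exact ((hS.mono inter_subset_left).measurableSet).union hS.measurableSet.compl
  · have he : S.indicator q ⁻¹' A = S ∩ {x | q x ∈ A} := by
      ext x
      by_cases hx : x ∈ S <;>
        simp [Set.indicator_of_mem, Set.indicator_of_notMem, hx, h0]
    rw [he]
    exact (hS.mono inter_subset_left).measurableSet

lemma wsum_compl_zero {X : Type*} [MeasurableSpace X] [MeasurableSingletonClass X]
    (c : ℕ → ℝ) (p : ℕ → X) {G : Set X} (hp : ∀ t, p t ∈ G) (hG : MeasurableSet G) :
    (Measure.sum fun t => ENNReal.ofReal (c t) • Measure.dirac (p t)) Gᶜ = 0 := by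
  rw [Measure.sum_apply _ hG.compl]
  simp only [Measure.smul_apply, smul_eq_mul]
  have : ∀ t, (Measure.dirac (p t)) Gᶜ = 0 := by
    intro t
    rw [Measure.dirac_apply' _ hG.compl]
    simp [hp t]
  simp [this]

lemma integral_wsum {X : Type*} [MeasurableSpace X] [MeasurableSingletonClass X]
    (c : ℕ → ℝ) (hc : ∀ t, 0 ≤ c t) (hcs : Summable c)
    (p : ℕ → X) (q : X → ℝ) (M : ℝ) (hM : ∀ t, |q (p t)| ≤ M) :
    ∫ x, q x ∂(Measure.sum fun t => ENNReal.ofReal (c t) • Measure.dirac (p t))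
      = ∑' t, c t * q (p t) := by
  set S : Set X := Set.range p with hSdef
  have hSc : S.Countable := countable_range p
  set q' : X → ℝ := S.indicator q with hq'def
  have hq'm : Measurable q' := countable_indicator_measurable hSc q
  have hq'p : ∀ t, q' (p t) = q (p t) := fun t => indicator_of_mem (mem_range_self t) q
  set μ : Measure X := Measure.sum fun t => ENNReal.ofReal (c t) • Measure.dirac (p t)
    with hμdef
  have hScompl : μ Sᶜ = 0 := wsum_compl_zero c p (fun t => mem_range_self t) hSc.measurableSet
  have hae : q =ᵐ[μ] q' := by
    refine measure_mono_null ?_ hScompl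
    intro x hx
    simp only [mem_compl_iff]
    intro hxS
    exact hx (by simp [hq'def, indicator_of_mem hxS])
  have hM0 : 0 ≤ M := le_trans (abs_nonneg _) (hM 0)
  have hint : Integrable q' μ := by
    constructor
    · exact hq'm.stronglyMeasurable.aestronglyMeasurable
    · rw [hasFiniteIntegral_iff_norm]
      calc ∫⁻ x, ENNReal.ofReal ‖q' x‖ ∂μ
          = ∑' t, ∫⁻ x, ENNReal.ofReal ‖q' x‖ ∂(ENNReal.ofReal (c t) • Measure.dirac (p t)) := by
            rw [hμdef, lintegral_sum_measure]
        _ = ∑' t, ENNReal.ofReal (c t) * ENNReal.ofReal ‖q' (p t)‖ := by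
            congr 1; funext t; rw [lintegral_smul_measure, lintegral_dirac, smul_eq_mul]
        _ ≤ ∑' t, ENNReal.ofReal (c t) * ENNReal.ofReal M := by
            refine ENNReal.tsum_le_tsum fun t => ?_
            exact mul_le_mul_right (ENNReal.ofReal_le_ofReal (by rw [hq'p t, Real.norm_eq_abs]; exact hM t)) _
        _ = ENNReal.ofReal M * ∑' t, ENNReal.ofReal (c t) := by rw [ENNReal.tsum_mul_right, mul_comm]
        _ = ENNReal.ofReal M * ENNReal.ofReal (∑' t, c t) := by
            rw [ENNReal.ofReal_tsum_of_nonneg hc hcs]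
        _ < ⊤ := ENNReal.mul_lt_top ENNReal.ofReal_lt_top ENNReal.ofReal_lt_top
  calc ∫ x, q x ∂μ = ∫ x, q' x ∂μ := integral_congr_ae hae
    _ = ∑' t, ∫ x, q' x ∂(ENNReal.ofReal (c t) • Measure.dirac (p t)) := by
        rw [hμdef] at hint ⊢; exact integral_sum_measure hint
    _ = ∑' t, c t * q (p t) := by
        congr 1; funext t
        rw [integral_smul_measure, integral_dirac, hq'p t, smul_eq_mul,
          ENNReal.toReal_ofReal (hc t)]

lemma geom_facts {α : ℝ} (hα0 : 0 < α) (hα1 : α < 1) (a : ℕ → ℝ) (M : ℝ)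
    (hM : ∀ t, |a t| ≤ M) :
    (∑' t : ℕ, α ^ (t+1) * (a (t+1) - a t)) = (∑' t : ℕ, ((1-α) * α ^ t) * (a t - a 0)) ∧
    |∑' t : ℕ, ((1-α) * α ^ t) * (a (t+1) - a t)| ≤ (1-α)/α * (2*M) := by
  have hM0 : 0 ≤ M := le_trans (abs_nonneg _) (hM 0)
  have hge : Summable (fun t : ℕ => α ^ t) := summable_geometric_of_lt_one hα0.le hα1
  have hbnd : ∀ (b : ℕ → ℝ), (∀ t, |b t| ≤ M) → Summable (fun t : ℕ => α ^ t * b t) := by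
    intro b hb
    refine Summable.of_norm_bounded (hge.mul_left M) fun t => ?_
    rw [Real.norm_eq_abs, abs_mul, abs_pow, abs_of_nonneg hα0.le, mul_comm]
    exact mul_le_mul_of_nonneg_right (hb t) (pow_nonneg hα0.le t)
  set S : ℝ := ∑' t : ℕ, α ^ t * a t with hS
  have hSa : Summable (fun t : ℕ => α ^ t * a t) := hbnd a hM
  have hSa' : Summable (fun t : ℕ => α ^ t * a (t+1)) := hbnd _ (fun t => hM (t+1))
  have h1 : (∑' t : ℕ, α ^ (t+1) * a (t+1)) = S - a 0 := by
    have := Summable.tsum_eq_zero_add hSa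
    simp only [pow_zero, one_mul] at this
    rw [hS]; linarith [this]
  have h2 : (∑' t : ℕ, α ^ (t+1) * a t) = α * S := by
    rw [hS, ← tsum_mul_left]
    exact tsum_congr fun t => by ring
  have h3 : (∑' t : ℕ, α ^ t * a (t+1)) = (S - a 0) / α := by
    have : (∑' t : ℕ, α ^ (t+1) * a (t+1)) = α * ∑' t : ℕ, α ^ t * a (t+1) := by
      rw [← tsum_mul_left]; exact tsum_congr fun t => by ring
    rw [this] at h1
    field_simp
    linarith [h1]
  have hsum1 : Summable (fun t : ℕ => α ^ (t+1) * a (t+1)) := by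
    have := hSa'.mul_left α
    refine this.congr fun t => by ring
  have hsum2 : Summable (fun t : ℕ => α ^ (t+1) * a t) := by
    have := hSa.mul_left α
    refine this.congr fun t => by ring
  have hnorm : Summable (fun t : ℕ => ‖α ^ t * a t‖) := by
    refine Summable.of_norm_bounded (hge.mul_left M) fun t => ?_
    rw [norm_norm, Real.norm_eq_abs, abs_mul, abs_pow, abs_of_nonneg hα0.le, mul_comm]
    exact mul_le_mul_of_nonneg_right (hM t) (pow_nonneg hα0.le t)
  have hSbound : |S| ≤ M * (1-α)⁻¹ := by
    calc |S| ≤ ∑' t : ℕ, ‖α ^ t * a t‖ := norm_tsum_le_tsum_norm hnorm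
      _ ≤ ∑' t : ℕ, M * α ^ t := by
          refine Summable.tsum_le_tsum (fun t => ?_) hnorm (hge.mul_left M)
          rw [Real.norm_eq_abs, abs_mul, abs_pow, abs_of_nonneg hα0.le, mul_comm]
          exact mul_le_mul_of_nonneg_right (hM t) (pow_nonneg hα0.le t)
      _ = M * (1-α)⁻¹ := by rw [tsum_mul_left, tsum_geometric_of_lt_one hα0.le hα1]
  have h1α : (0:ℝ) < 1 - α := by linarith
  constructor
  · have lhs : (∑' t : ℕ, α ^ (t+1) * (a (t+1) - a t)) = (S - a 0) - α * S := by
      have e : (∑' t : ℕ, α ^ (t+1) * (a (t+1) - a t))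
          = (∑' t : ℕ, (α ^ (t+1) * a (t+1) - α ^ (t+1) * a t)) :=
        tsum_congr fun t => by ring
      rw [e, Summable.tsum_sub hsum1 hsum2, h1, h2]
    have rhs : (∑' t : ℕ, ((1-α) * α ^ t) * (a t - a 0)) = (1-α) * S - a 0 := by
      have e : (∑' t : ℕ, ((1-α) * α ^ t) * (a t - a 0))
          = ∑' t : ℕ, ((1-α) * (α ^ t * a t) - ((1-α) * a 0) * α ^ t) :=
        tsum_congr fun t => by ring
      rw [e, Summable.tsum_sub ((hSa).mul_left (1-α)) (hge.mul_left ((1-α) * a 0)),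
        tsum_mul_left, tsum_mul_left, tsum_geometric_of_lt_one hα0.le hα1, hS]
      field_simp
    rw [lhs, rhs]; ring
  · have lhs2 : (∑' t : ℕ, ((1-α) * α ^ t) * (a (t+1) - a t))
        = (1-α)/α * ((1-α) * S - a 0) := by
      have e : (∑' t : ℕ, ((1-α) * α ^ t) * (a (t+1) - a t))
          = ∑' t : ℕ, ((1-α) * (α ^ t * a (t+1)) - (1-α) * (α ^ t * a t)) :=
        tsum_congr fun t => by ring
      rw [e, Summable.tsum_sub (hSa'.mul_left (1-α)) (hSa.mul_left (1-α)), tsum_mul_left,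
        tsum_mul_left, h3, hS]
      field_simp
      ring
    rw [lhs2, abs_mul]
    have hq : |(1-α)/α| = (1-α)/α := abs_of_nonneg (div_nonneg h1α.le hα0.le)
    rw [hq]
    refine mul_le_mul_of_nonneg_left ?_ (div_nonneg h1α.le hα0.le)
    have hA : |(1-α) * S| ≤ M := by
      rw [abs_mul, abs_of_nonneg h1α.le]
      calc (1-α) * |S| ≤ (1-α) * (M * (1-α)⁻¹) := mul_le_mul_of_nonneg_left hSbound h1α.le
        _ = M := by field_simp
    calc |(1-α) * S - a 0| ≤ |(1-α) * S| + |a 0| := abs_sub _ _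
      _ ≤ M + M := add_le_add hA (hM 0)
      _ = 2 * M := by ring

theorem stmt_1
    (Y : Set (Fin m → ℝ)) (hYne : Y.Nonempty) (hYcomp : IsCompact Y)
    (U : (Fin m → ℝ) → Set U₀)
    (hUne : ∀ y ∈ Y, (U y).Nonempty) (hUcomp : ∀ y ∈ Y, IsCompact (U y))
    (hUgraph : IsClosed {p : (Fin m → ℝ) × U₀ | p.1 ∈ Y ∧ p.2 ∈ U p.1})
    (f : (Fin m → ℝ) × U₀ → (Fin m → ℝ)) (hf : Continuous f)
    (k : (Fin m → ℝ) × U₀ → ℝ) (hk : Continuous k)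
    (hA : ∀ y ∈ Y, ∃ u ∈ U y, f (y, u) ∈ Y)
    (y₀ : Fin m → ℝ) (hy₀ : y₀ ∈ Y)
    (αi : ℕ → ℝ) (hαmem : ∀ i, αi i ∈ Set.Ioo (0 : ℝ) 1)
    (hαmono : Monotone αi) (hαlim : Tendsto αi atTop (𝓝 1))
    (γi : ℕ → Measure ((Fin m → ℝ) × U₀))
    (hγi : ∀ i, γi i ∈ Theta Y U f (αi i) y₀)
    (γ : Measure ((Fin m → ℝ) × U₀))
    (hγP : IsProbabilityMeasure γ) (hγG : γ (Gset Y U f)ᶜ = 0)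
    (hconv : WeakStarTendstoOn (Gset Y U f) γi γ) :
    γ ∈ W2set Y U f y₀ := by
  have hGclosed : IsClosed (Gset Y U f) := by
    have h2 : IsClosed (f ⁻¹' Y) := hYcomp.isClosed.preimage hf
    have he : Gset Y U f = {p : (Fin m → ℝ) × U₀ | p.1 ∈ Y ∧ p.2 ∈ U p.1} ∩ f ⁻¹' Y := by
      ext p; simp only [Gset, mem_setOf_eq, mem_inter_iff, mem_preimage]; tauto
    rw [he]; exact hUgraph.inter h2
  have hGmeas : MeasurableSet (Gset Y U f) := hGclosed.measurableSet
  choose ys us hadm hγeq using hγi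
  have hα0 : ∀ i, 0 < αi i := fun i => (hαmem i).1
  have hα1 : ∀ i, αi i < 1 := fun i => (hαmem i).2
  have hyY : ∀ i t, ys i t ∈ Y := fun i t => ((hadm i).2 t).2.1
  have hfy : ∀ i t, f (ys i t, us i t) = ys i (t+1) := fun i t => (((hadm i).2 t).2.2).symm
  have hpt : ∀ i t, (ys i t, us i t) ∈ Gset Y U f := fun i t =>
    ⟨hyY i t, ((hadm i).2 t).1, by rw [hfy i t]; exact hyY i (t+1)⟩
  have hy0 : ∀ i, ys i 0 = y₀ := fun i => (hadm i).1
  set ξ : ℕ → Measure ((Fin m → ℝ) × U₀) := fun i =>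
    Measure.sum fun t => ENNReal.ofReal ((αi i) ^ (t+1)) • Measure.dirac (ys i t, us i t)
    with hξdef
  have hcs1 : ∀ i, Summable (fun t : ℕ => (1 - αi i) * (αi i) ^ t) := fun i =>
    (summable_geometric_of_lt_one (hα0 i).le (hα1 i)).mul_left _
  have hcs2 : ∀ i, Summable (fun t : ℕ => (αi i) ^ (t+1)) := fun i =>
    ((summable_geometric_of_lt_one (hα0 i).le (hα1 i)).mul_left (αi i)).congr
      (fun t => by rw [pow_succ]; ring)
  have hc1 : ∀ i (t : ℕ), 0 ≤ (1 - αi i) * (αi i) ^ t := fun i t =>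
    mul_nonneg (by linarith [hα1 i]) (pow_nonneg (hα0 i).le t)
  have hc2 : ∀ i (t : ℕ), 0 ≤ (αi i) ^ (t+1) := fun i t => pow_nonneg (hα0 i).le _
  -- Part 1: γ ∈ Wset
  have hW3 : ∀ φ : (Fin m → ℝ) → ℝ, ContinuousOn φ Y →
      ∫ p, (φ (f p) - φ p.1) ∂γ = 0 := by
    intro φ hφ
    obtain ⟨M, hMb⟩ := hYcomp.exists_bound_of_continuousOn hφ
    have hMabs : ∀ i t, |φ (ys i t)| ≤ M := fun i t => by
      have := hMb _ (hyY i t); rwa [Real.norm_eq_abs] at this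
    have hq1cont : ContinuousOn (fun p : (Fin m → ℝ) × U₀ => φ (f p) - φ p.1) (Gset Y U f) :=
      (hφ.comp hf.continuousOn (fun p hp => hp.2.2)).sub
        (hφ.comp continuous_fst.continuousOn (fun p hp => hp.1))
    have hlim1 := hconv _ hq1cont
    have hb : ∀ i (t : ℕ),
        |(fun p : (Fin m → ℝ) × U₀ => φ (f p) - φ p.1) (ys i t, us i t)| ≤ 2*M := by
      intro i t
      simp only
      rw [hfy i t]
      calc |φ (ys i (t+1)) - φ (ys i t)| ≤ |φ (ys i (t+1))| + |φ (ys i t)| := abs_sub _ _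
        _ ≤ M + M := add_le_add (hMabs i (t+1)) (hMabs i t)
        _ = 2*M := by ring
    have hval : ∀ i, ∫ p, (φ (f p) - φ p.1) ∂(γi i)
        = ∑' t : ℕ, ((1 - αi i) * αi i ^ t) * (φ (ys i (t+1)) - φ (ys i t)) := by
      intro i
      rw [hγeq i]
      have e := integral_wsum (fun t => (1 - αi i) * αi i ^ t) (hc1 i) (hcs1 i)
        (fun t => (ys i t, us i t)) (fun p => φ (f p) - φ p.1) (2*M) (hb i)
      exact e.trans (tsum_congr fun t => by simp only []; rw [hfy i t])
    have hbound : ∀ i, |∫ p, (φ (f p) - φ p.1) ∂(γi i)| ≤ (1 - αi i)/(αi i) * (2*M) := by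
      intro i; rw [hval i]
      exact (geom_facts (hα0 i) (hα1 i) (fun t => φ (ys i t)) M (hMabs i)).2
    have hlim0 : Tendsto (fun i => ∫ p, (φ (f p) - φ p.1) ∂(γi i)) atTop (𝓝 0) := by
      refine squeeze_zero_norm (a := fun i => (1 - αi i)/(αi i) * (2*M))
        (fun i => by rw [Real.norm_eq_abs]; exact hbound i) ?_
      have ht : Tendsto (fun i => (1 - αi i)/(αi i) * (2*M)) atTop
          (𝓝 ((1-1)/1 * (2*M))) :=
        (((tendsto_const_nhds.sub hαlim).div hαlim one_ne_zero).mul_const (2*M))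
      simpa using ht
    exact tendsto_nhds_unique hlim1 hlim0
  refine ⟨⟨hγP, hγG, hW3⟩, ξ, fun i => ⟨?_, ?_⟩, ?_⟩
  · -- finiteness of ξ i
    constructor
    rw [hξdef]
    simp only
    rw [Measure.sum_apply _ MeasurableSet.univ]
    have he : ∀ t : ℕ, (ENNReal.ofReal (αi i ^ (t+1)) • Measure.dirac (ys i t, us i t))
        Set.univ = ENNReal.ofReal (αi i ^ (t+1)) := by
      intro t; simp
    rw [tsum_congr he, ← ENNReal.ofReal_tsum_of_nonneg (hc2 i) (hcs2 i)]
    exact ENNReal.ofReal_lt_top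
  · exact wsum_compl_zero _ _ (hpt i) hGmeas
  · intro φ hφ
    obtain ⟨M, hMb⟩ := hYcomp.exists_bound_of_continuousOn hφ
    have hMabs : ∀ i t, |φ (ys i t)| ≤ M := fun i t => by
      have := hMb _ (hyY i t); rwa [Real.norm_eq_abs] at this
    have hMy0 : |φ y₀| ≤ M := by have := hMb _ hy₀; rwa [Real.norm_eq_abs] at this
    have hb1 : ∀ i (t : ℕ),
        |(fun p : (Fin m → ℝ) × U₀ => φ (f p) - φ p.1) (ys i t, us i t)| ≤ 2*M := by
      intro i t
      simp only
      rw [hfy i t]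
      calc |φ (ys i (t+1)) - φ (ys i t)| ≤ |φ (ys i (t+1))| + |φ (ys i t)| := abs_sub _ _
        _ ≤ M + M := add_le_add (hMabs i (t+1)) (hMabs i t)
        _ = 2*M := by ring
    have hb2 : ∀ i (t : ℕ),
        |(fun p : (Fin m → ℝ) × U₀ => φ p.1 - φ y₀) (ys i t, us i t)| ≤ 2*M := by
      intro i t
      simp only
      calc |φ (ys i t) - φ y₀| ≤ |φ (ys i t)| + |φ y₀| := abs_sub _ _
        _ ≤ M + M := add_le_add (hMabs i t) hMy0
        _ = 2*M := by ring
    have hval2 : ∀ i, ∫ p, (φ (f p) - φ p.1) ∂(ξ i) = ∫ p, (φ p.1 - φ y₀) ∂(γi i) := by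
      intro i
      have e1 : ∫ p, (φ (f p) - φ p.1) ∂(ξ i)
          = ∑' t : ℕ, (αi i ^ (t+1)) * (φ (ys i (t+1)) - φ (ys i t)) := by
        have e := integral_wsum (fun t => αi i ^ (t+1)) (hc2 i) (hcs2 i)
          (fun t => (ys i t, us i t)) (fun p => φ (f p) - φ p.1) (2*M) (hb1 i)
        exact e.trans (tsum_congr fun t => by simp only []; rw [hfy i t])
      have e2 : ∫ p, (φ p.1 - φ y₀) ∂(γi i)
          = ∑' t : ℕ, ((1 - αi i) * αi i ^ t) * (φ (ys i t) - φ (ys i 0)) := by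
        rw [hγeq i]
        have e := integral_wsum (fun t => (1 - αi i) * αi i ^ t) (hc1 i) (hcs1 i)
          (fun t => (ys i t, us i t)) (fun p => φ p.1 - φ y₀) (2*M) (hb2 i)
        exact e.trans (tsum_congr fun t => by simp only []; rw [hy0 i])
      rw [e1, e2]
      exact (geom_facts (hα0 i) (hα1 i) (fun t => φ (ys i t)) M (hMabs i)).1
    have hq2cont : ContinuousOn (fun p : (Fin m → ℝ) × U₀ => φ p.1 - φ y₀) (Gset Y U f) :=
      (hφ.comp continuous_fst.continuousOn (fun p hp => hp.1)).sub continuousOn_const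
    have := hconv _ hq2cont
    simp only [hval2]
    exact this
end
end

section
/- For every y_0 ∈ Y, liminf_{T→∞} V_T(y_0) ≥ d*(y_0). -/
open MeasureTheory Filter Topology Set

noncomputable section

variable {m : ℕ} {U₀ : Type*} [MetricSpace U₀] [CompactSpace U₀]
  [MeasurableSpace U₀] [BorelSpace U₀]

theorem stmt_3
    (Y : Set (Fin m → ℝ)) (hYne : Y.Nonempty) (hYcomp : IsCompact Y)
    (U : (Fin m → ℝ) → Set U₀)
    (hUne : ∀ y ∈ Y, (U y).Nonempty) (hUcomp : ∀ y ∈ Y, IsCompact (U y))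
    (hUgraph : IsClosed {p : (Fin m → ℝ) × U₀ | p.1 ∈ Y ∧ p.2 ∈ U p.1})
    (f : (Fin m → ℝ) × U₀ → (Fin m → ℝ)) (hf : Continuous f)
    (k : (Fin m → ℝ) × U₀ → ℝ) (hk : Continuous k)
    (hA : ∀ y ∈ Y, ∃ u ∈ U y, f (y, u) ∈ Y) :
    ∀ y₀ ∈ Y, dstar Y U f k y₀ ≤ liminf (fun T : ℕ => VT Y U f k T y₀) atTop := by
  intro y₀ hy₀
  have hneU : Nonempty U₀ := ⟨(hUne y₀ hy₀).choose⟩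
  -- bound on k over Y × univ
  obtain ⟨Ck₀, hCk₀⟩ := (hYcomp.prod isCompact_univ).exists_bound_of_continuousOn
    (f := k) hk.continuousOn
  set Ck : ℝ := max Ck₀ 0 with hCkdef
  have hCk0 : 0 ≤ Ck := le_max_right _ _
  have hCk : ∀ p : (Fin m → ℝ) × U₀, p.1 ∈ Y → |k p| ≤ Ck := by
    intro p hp
    exact le_trans (hCk₀ p ⟨hp, mem_univ _⟩) (le_max_left _ _)
  -- construct an admissible process from any point of Y
  choose! uch h1 h2 using hA
  have hexad : ∀ z ∈ Y, ∃ y u, Admissible Y U f z y u := by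
    intro z hz
    refine ⟨fun t => (fun y => f (y, uch y))^[t] z, fun t => uch ((fun y => f (y, uch y))^[t] z), ?_, ?_⟩
    · simp
    · intro t
      have hmem : ∀ s : ℕ, (fun y => f (y, uch y))^[s] z ∈ Y := by
        intro s
        induction s with
        | zero => simpa using hz
        | succ n ih =>
          rw [Function.iterate_succ_apply']
          exact h2 _ ih
      refine ⟨h1 _ (hmem t), hmem t, ?_⟩
      show (fun y => f (y, uch y))^[t+1] z = _
      rw [Function.iterate_succ_apply']
  -- the VT sets are nonempty and bounded below by -Ck
  have hVTne : ∀ T : ℕ, {c | ∃ y u, Admissible Y U f y₀ y u ∧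
      c = (∑ t ∈ Finset.range T, k (y t, u t)) / (T : ℝ)}.Nonempty := by
    intro T
    obtain ⟨y, u, hadm⟩ := hexad y₀ hy₀
    exact ⟨_, y, u, hadm, rfl⟩
  have hVTabs : ∀ T : ℕ, ∀ c ∈ {c | ∃ y u, Admissible Y U f y₀ y u ∧
      c = (∑ t ∈ Finset.range T, k (y t, u t)) / (T : ℝ)}, |c| ≤ Ck := by
    rintro T c ⟨y, u, hadm, rfl⟩
    rcases Nat.eq_zero_or_pos T with hT | hT
    · simp [hT, hCk0]
    · have hsum : |∑ t ∈ Finset.range T, k (y t, u t)| ≤ T * Ck := by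
        calc |∑ t ∈ Finset.range T, k (y t, u t)|
            ≤ ∑ t ∈ Finset.range T, |k (y t, u t)| := Finset.abs_sum_le_sum_abs _ _
          _ ≤ ∑ _t ∈ Finset.range T, Ck := by
              refine Finset.sum_le_sum fun t _ => hCk _ (hadm.2 t).2.1
          _ = T * Ck := by simp [mul_comm]
      rw [abs_div, abs_of_nonneg (by positivity : (0:ℝ) ≤ (T:ℝ))]
      rw [div_le_iff₀ (by exact_mod_cast hT)]
      linarith [hsum]
  have hVTbdd : ∀ T : ℕ, BddBelow {c | ∃ y u, Admissible Y U f y₀ y u ∧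
      c = (∑ t ∈ Finset.range T, k (y t, u t)) / (T : ℝ)} :=
    fun T => ⟨-Ck, fun c hc => neg_le_of_abs_le (hVTabs T c hc)⟩
  -- V_T is bounded above by Ck
  have hVub : ∀ T : ℕ, VT Y U f k T y₀ ≤ Ck := by
    intro T
    obtain ⟨c, hc⟩ := hVTne T
    exact le_trans (csInf_le (hVTbdd T) hc) (le_of_abs_le (hVTabs T c hc))
  -- main bound: every feasible μ is ≤ liminf
  refine csSup_le ?_ ?_
  · -- nonemptiness of the dual feasible set
    refine ⟨-Ck, 0, 0, continuousOn_const, continuousOn_const, fun p hp => ?_⟩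
    have := neg_le_of_abs_le (hCk p hp.1)
    constructor <;> simp <;> linarith
  · rintro μ ⟨ψ, η, hψc, hηc, hfeas⟩
    -- bound on η over Y
    obtain ⟨Cη₀, hCη₀⟩ := hYcomp.exists_bound_of_continuousOn hηc
    set Cη : ℝ := max Cη₀ 0 with hCηdef
    have hCη0 : 0 ≤ Cη := le_max_right _ _
    have hCη : ∀ y ∈ Y, |η y| ≤ Cη := fun y hy => le_trans (hCη₀ y hy) (le_max_left _ _)
    -- key estimate : V_T ≥ μ - 2Cη/T for T ≥ 1
    have hkey : ∀ T : ℕ, 1 ≤ T → μ - 2 * Cη / T ≤ VT Y U f k T y₀ := by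
      intro T hT
      refine le_csInf (hVTne T) ?_
      rintro c ⟨y, u, hadm, rfl⟩
      have hG : ∀ t : ℕ, (y t, u t) ∈ Gset Y U f := by
        intro t
        refine ⟨(hadm.2 t).2.1, (hadm.2 t).1, ?_⟩
        have := (hadm.2 t).2.2
        rw [← this]
        exact (hadm.2 (t + 1)).2.1
      have hψmono : ∀ t : ℕ, ψ y₀ ≤ ψ (y t) := by
        intro t
        induction t with
        | zero => rw [hadm.1]
        | succ n ih =>
          have h2' := (hfeas _ (hG n)).2
          have := (hadm.2 n).2.2
          rw [this]
          simp only at h2'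
          linarith
      have hstep : ∀ t : ℕ, μ + (η (y t) - η (y (t + 1))) ≤ k (y t, u t) := by
        intro t
        have h1' := (hfeas _ (hG t)).1
        simp only at h1'
        have heq := (hadm.2 t).2.2
        rw [← heq] at h1'
        have := hψmono t
        linarith
      have hsum : (T : ℝ) * μ + (η (y 0) - η (y T)) ≤ ∑ t ∈ Finset.range T, k (y t, u t) := by
        have := Finset.sum_le_sum (fun t (_ : t ∈ Finset.range T) => hstep t)
        have htel : ∑ t ∈ Finset.range T, (η (y t) - η (y (t + 1))) = η (y 0) - η (y T) := by
          have := Finset.sum_range_sub' (fun t => η (y t)) T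
          simpa using this
        calc (T : ℝ) * μ + (η (y 0) - η (y T))
            = ∑ t ∈ Finset.range T, (μ + (η (y t) - η (y (t + 1)))) := by
              rw [Finset.sum_add_distrib, htel]; simp [mul_comm]
          _ ≤ ∑ t ∈ Finset.range T, k (y t, u t) := this
      have hηb0 := hCη _ (hadm.2 0).2.1
      have hηbT := hCη _ (hadm.2 T).2.1
      have hTpos : (0:ℝ) < T := by exact_mod_cast hT
      rw [le_div_iff₀ hTpos]
      have hdm : 2 * Cη / (T:ℝ) * T = 2 * Cη := div_mul_cancel₀ _ (ne_of_gt hTpos)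
      have h0 := abs_le.1 hηb0
      have hTb := abs_le.1 hηbT
      nlinarith [hsum]
    -- pass to the liminf
    have htend : Tendsto (fun T : ℕ => μ - 2 * Cη / T) atTop (𝓝 μ) := by
      have h0 : Tendsto (fun T : ℕ => 2 * Cη / (T : ℝ)) atTop (𝓝 0) :=
        tendsto_const_nhds.div_atTop tendsto_natCast_atTop_atTop
      simpa using tendsto_const_nhds.sub h0
    have hbddu : IsBoundedUnder (· ≥ ·) atTop (fun T : ℕ => μ - 2 * Cη / T) :=
      htend.isBoundedUnder_ge
    have hcobdd : IsCoboundedUnder (· ≥ ·) atTop (fun T : ℕ => VT Y U f k T y₀) :=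
      IsBoundedUnder.isCoboundedUnder_ge (isBoundedUnder_of ⟨Ck, fun T => hVub T⟩)
    have hle : liminf (fun T : ℕ => μ - 2 * Cη / T) atTop ≤
        liminf (fun T : ℕ => VT Y U f k T y₀) atTop := by
      refine liminf_le_liminf ?_ hbddu hcobdd
      filter_upwards [eventually_ge_atTop 1] with T hT
      exact hkey T hT
    rwa [htend.liminf_eq] at hle
end
end

section
/- For every y_0 ∈ Y, liminf_{α↑1} h_α(y_0) ≥ d*(y_0). -/
open MeasureTheory Filter Topology Set

noncomputable section

variable {m : ℕ} {U₀ : Type*} [MetricSpace U₀] [CompactSpace U₀]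
  [MeasurableSpace U₀] [BorelSpace U₀]

theorem stmt_4
    (Y : Set (Fin m → ℝ)) (hYne : Y.Nonempty) (hYcomp : IsCompact Y)
    (U : (Fin m → ℝ) → Set U₀)
    (hUne : ∀ y ∈ Y, (U y).Nonempty) (hUcomp : ∀ y ∈ Y, IsCompact (U y))
    (hUgraph : IsClosed {p : (Fin m → ℝ) × U₀ | p.1 ∈ Y ∧ p.2 ∈ U p.1})
    (f : (Fin m → ℝ) × U₀ → (Fin m → ℝ)) (hf : Continuous f)
    (k : (Fin m → ℝ) × U₀ → ℝ) (hk : Continuous k)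
    (hA : ∀ y ∈ Y, ∃ u ∈ U y, f (y, u) ∈ Y) :
    ∀ y₀ ∈ Y, dstar Y U f k y₀ ≤
      liminf (fun α : ℝ => hdisc Y U f k α y₀) (𝓝[Set.Ioo (0 : ℝ) 1] 1) := by
  intro y₀ hy₀
  have hFne : Filter.NeBot (𝓝[Set.Ioo (0 : ℝ) 1] 1) := by
    refine mem_closure_iff_nhdsWithin_neBot.mp ?_
    rw [closure_Ioo (by norm_num : (0:ℝ) ≠ 1)]
    exact ⟨by norm_num, le_rfl⟩
  -- bound for k on Y × univ
  obtain ⟨C, hC⟩ := (hYcomp.prod isCompact_univ).exists_bound_of_continuousOn hk.continuousOn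
  -- construct one admissible process
  have hA' : ∀ y : {x // x ∈ Y}, ∃ u : U₀, u ∈ U y.1 ∧ f (y.1, u) ∈ Y := by
    intro y; obtain ⟨u, hu, hfu⟩ := hA y.1 y.2; exact ⟨u, hu, hfu⟩
  choose uF huF hfF using hA'
  let yseq : ℕ → {x // x ∈ Y} :=
    fun n => Nat.rec ⟨y₀, hy₀⟩ (fun _ p => ⟨f (p.1, uF p), hfF p⟩) n
  have hAdm : Admissible Y U f y₀ (fun t => (yseq t).1) (fun t => uF (yseq t)) :=
    ⟨rfl, fun t => ⟨huF _, (yseq t).2, rfl⟩⟩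
  -- main step and conclusion
  refine csSup_le ⟨-C, 0, 0, continuousOn_const, continuousOn_const, fun p hp => ?_⟩ ?_
  · constructor
    · have := hC p ⟨hp.1, trivial⟩
      have := abs_le.mp (by simpa using this)
      simp only [Pi.zero_apply]
      linarith [this.1]
    · simp
  rintro μ ⟨ψ, η, hψ, hη, hfeas⟩
  obtain ⟨M, hM⟩ := hYcomp.exists_bound_of_continuousOn hη
  have hM0 : 0 ≤ M := le_trans (norm_nonneg _) (hM _ hy₀)
  set L : ℝ → ℝ := fun α => μ - 2 * M * (1 - α) / α with hL_def
  -- Step A : pointwise bound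
  have stepA : ∀ α ∈ Set.Ioo (0:ℝ) 1,
      L α ≤ hdisc Y U f k α y₀ ∧ hdisc Y U f k α y₀ ≤ C := by
    rintro α ⟨hα0, hα1⟩
    have h1α : (0:ℝ) < 1 - α := by linarith
    have hαlt : |α| < 1 := by rw [abs_of_pos hα0]; exact hα1
    have hgeo : Summable (fun t : ℕ => α ^ t) := summable_geometric_of_lt_one hα0.le hα1
    -- fix a generic admissible process and derive the bound on its cost
    have key : ∀ (y : ℕ → (Fin m → ℝ)) (u : ℕ → U₀), Admissible Y U f y₀ y u →
        L α ≤ (1 - α) * ∑' t : ℕ, α ^ t * k (y t, u t) ∧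
        (1 - α) * ∑' t : ℕ, α ^ t * k (y t, u t) ≤ C := by
      rintro y u ⟨hy0, hstep⟩
      have hG : ∀ t, (y t, u t) ∈ Gset Y U f := by
        intro t
        refine ⟨(hstep t).2.1, (hstep t).1, ?_⟩
        have := (hstep t).2.2
        rw [← this]
        exact (hstep (t + 1)).2.1
      -- summability facts
      have hsumk : Summable (fun t : ℕ => α ^ t * k (y t, u t)) := by
        refine Summable.of_norm_bounded (hgeo.mul_left C) (fun t => ?_)
        have hb := hC (y t, u t) ⟨(hG t).1, trivial⟩
        rw [norm_mul, norm_pow, Real.norm_eq_abs, abs_of_pos hα0, mul_comm]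
        exact mul_le_mul_of_nonneg_right hb (pow_nonneg hα0.le t)
      have hSsum : Summable (fun t : ℕ => α ^ t * η (y t)) := by
        refine Summable.of_norm_bounded (hgeo.mul_left M) (fun t => ?_)
        rw [norm_mul, norm_pow, Real.norm_eq_abs, abs_of_pos hα0, mul_comm]
        exact mul_le_mul_of_nonneg_right (hM _ (hG t).1) (pow_nonneg hα0.le t)
      have hSsum' : Summable (fun t : ℕ => α ^ t * η (y (t + 1))) := by
        refine Summable.of_norm_bounded (hgeo.mul_left M) (fun t => ?_)
        rw [norm_mul, norm_pow, Real.norm_eq_abs, abs_of_pos hα0, mul_comm]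
        exact mul_le_mul_of_nonneg_right (hM _ (hG (t+1)).1) (pow_nonneg hα0.le t)
      set Sv : ℝ := ∑' t : ℕ, α ^ t * η (y t) with hSv
      set Sv' : ℝ := ∑' t : ℕ, α ^ t * η (y (t + 1)) with hSv'
      -- ψ is nondecreasing along the trajectory
      have hψmono : ∀ t, ψ y₀ ≤ ψ (y t) := by
        intro t
        induction t with
        | zero => rw [hy0]
        | succ n ih =>
          have h2 := (hfeas (y n, u n) (hG n)).2
          have := (hstep n).2.2
          rw [this]
          have : ψ (y n) ≤ ψ (f (y n, u n)) := by linarith [h2]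
          linarith
      -- pointwise bound on k
      have hkpt : ∀ t, μ * α ^ t + (α ^ t * η (y t) - α ^ t * η (y (t + 1))) ≤
          α ^ t * k (y t, u t) := by
        intro t
        have h1 := (hfeas (y t, u t) (hG t)).1
        have h2 := hψmono t
        have hfy : f (y t, u t) = y (t + 1) := ((hstep t).2.2).symm
        rw [hfy] at h1
        have hk' : μ + η (y t) - η (y (t + 1)) ≤ k (y t, u t) := by linarith
        have hp : (0:ℝ) ≤ α ^ t := pow_nonneg hα0.le t
        nlinarith [mul_le_mul_of_nonneg_left hk' hp]
      -- sum the pointwise bounds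
      have hsumL : Summable (fun t : ℕ =>
          μ * α ^ t + (α ^ t * η (y t) - α ^ t * η (y (t + 1)))) :=
        (hgeo.mul_left μ).add (hSsum.sub hSsum')
      have htsum : μ * (1 - α)⁻¹ + (Sv - Sv') ≤ ∑' t : ℕ, α ^ t * k (y t, u t) := by
        have := Summable.tsum_le_tsum hkpt hsumL hsumk
        rwa [Summable.tsum_add (hgeo.mul_left μ) (hSsum.sub hSsum'), tsum_mul_left,
          tsum_geometric_of_lt_one hα0.le hα1,
          Summable.tsum_sub hSsum hSsum'] at this
      -- the Abel identity  Sv = η y₀ + α * Sv'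
      have hid : Sv = η y₀ + α * Sv' := by
        rw [hSv, Summable.tsum_eq_zero_add hSsum]
        congr 1
        · simp [hy0]
        · rw [← tsum_mul_left]
          exact tsum_congr fun n => by ring
      -- |Sv| ≤ M / (1 - α)
      have hSb : |Sv| ≤ M * (1 - α)⁻¹ := by
        have hterm : ∀ t : ℕ, ‖α ^ t * η (y t)‖ ≤ M * α ^ t := fun t => by
          rw [norm_mul, norm_pow, Real.norm_eq_abs, abs_of_pos hα0, mul_comm]
          exact mul_le_mul_of_nonneg_right (hM _ (hG t).1) (pow_nonneg hα0.le t)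
        have hnsum : Summable (fun t : ℕ => ‖α ^ t * η (y t)‖) :=
          Summable.of_nonneg_of_le (fun t => norm_nonneg _) hterm (hgeo.mul_left M)
        have h1 : ‖Sv‖ ≤ ∑' t : ℕ, ‖α ^ t * η (y t)‖ := norm_tsum_le_tsum_norm hnsum
        have h2 : ∑' t : ℕ, ‖α ^ t * η (y t)‖ ≤ M * (1 - α)⁻¹ := by
          have := Summable.tsum_le_tsum hterm hnsum (hgeo.mul_left M)
          rwa [tsum_mul_left, tsum_geometric_of_lt_one hα0.le hα1] at this
        calc |Sv| = ‖Sv‖ := rfl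
          _ ≤ _ := le_trans h1 h2
      have hηb : |η y₀| ≤ M := hM _ hy₀
      -- conclude
      have habs1 := abs_le.mp hSb
      have habs2 := abs_le.mp hηb
      have hSmul : |(1 - α) * Sv| ≤ M := by
        rw [abs_mul, abs_of_pos h1α]
        calc (1 - α) * |Sv| ≤ (1 - α) * (M * (1 - α)⁻¹) :=
              mul_le_mul_of_nonneg_left hSb h1α.le
          _ = M := by field_simp
      have habs3 := abs_le.mp hSmul
      -- (1-α)(Sv - Sv') = (1-α)(η y₀ - (1-α) Sv)/α
      have hfin : L α ≤ (1 - α) * (μ * (1 - α)⁻¹ + (Sv - Sv')) := by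
        rw [hL_def]
        have hα : α ≠ 0 := hα0.ne'
        have hdiff : α * (Sv - Sv') = η y₀ - (1 - α) * Sv := by
          rw [hid]; ring
        have expand : ((1:ℝ) - α) * (μ * (1 - α)⁻¹ + (Sv - Sv')) =
            μ + (1 - α) * (Sv - Sv') := by field_simp
        show μ - 2 * M * (1 - α) / α ≤ _
        rw [expand]
        have h3 : -(2 * M * (1 - α)) ≤ ((1 - α) * (Sv - Sv')) * α := by
          have hrw : ((1 - α) * (Sv - Sv')) * α = (1 - α) * (η y₀ - (1 - α) * Sv) := by
            rw [← hdiff]; ring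
          rw [hrw]
          nlinarith [habs2.1, habs3.1]
        have hq : -(2 * M * (1 - α)) / α ≤ (1 - α) * (Sv - Sv') :=
          (div_le_iff₀ hα0).mpr h3
        rw [neg_div] at hq
        linarith
      constructor
      · calc L α ≤ (1 - α) * (μ * (1 - α)⁻¹ + (Sv - Sv')) := hfin
          _ ≤ (1 - α) * ∑' t : ℕ, α ^ t * k (y t, u t) :=
              mul_le_mul_of_nonneg_left htsum h1α.le
      · have htermk : ∀ t : ℕ, ‖α ^ t * k (y t, u t)‖ ≤ C * α ^ t := fun t => by
          rw [norm_mul, norm_pow, Real.norm_eq_abs, abs_of_pos hα0, mul_comm]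
          exact mul_le_mul_of_nonneg_right (hC (y t, u t) ⟨(hG t).1, trivial⟩)
            (pow_nonneg hα0.le t)
        have hnsumk : Summable (fun t : ℕ => ‖α ^ t * k (y t, u t)‖) :=
          Summable.of_nonneg_of_le (fun t => norm_nonneg _) htermk (hgeo.mul_left C)
        have hub : ∑' t : ℕ, α ^ t * k (y t, u t) ≤ C * (1 - α)⁻¹ := by
          have h1 : ∑' t : ℕ, α ^ t * k (y t, u t) ≤ ∑' t : ℕ, ‖α ^ t * k (y t, u t)‖ :=
            Summable.tsum_le_tsum (fun t => le_abs_self _) hsumk hnsumk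
          have h2 : ∑' t : ℕ, ‖α ^ t * k (y t, u t)‖ ≤ C * (1 - α)⁻¹ := by
            have := Summable.tsum_le_tsum htermk hnsumk (hgeo.mul_left C)
            rwa [tsum_mul_left, tsum_geometric_of_lt_one hα0.le hα1] at this
          exact le_trans h1 h2
        calc (1 - α) * ∑' t : ℕ, α ^ t * k (y t, u t)
            ≤ (1 - α) * (C * (1 - α)⁻¹) := mul_le_mul_of_nonneg_left hub h1α.le
          _ = C := by field_simp
    -- from the bound on every process to the bound on the infimum
    rw [hdisc]
    set Sset := {c | ∃ y u, Admissible Y U f y₀ y u ∧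
      c = ∑' t : ℕ, α ^ t * k (y t, u t)} with hSset
    have hSne : Sset.Nonempty :=
      ⟨_, _, _, hAdm, rfl⟩
    have hlb : ∀ c ∈ Sset, L α / (1 - α) ≤ c := by
      rintro c ⟨y, u, hadm, rfl⟩
      rw [div_le_iff₀ (by linarith : (0:ℝ) < 1 - α)]
      calc L α ≤ (1 - α) * ∑' t : ℕ, α ^ t * k (y t, u t) := (key y u hadm).1
        _ = _ := by ring
    have hinf : L α / (1 - α) ≤ sInf Sset := le_csInf hSne hlb
    constructor
    · calc L α = (1 - α) * (L α / (1 - α)) := by field_simp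
        _ ≤ (1 - α) * sInf Sset :=
            mul_le_mul_of_nonneg_left hinf (by linarith)
    · have hmem : (∑' t : ℕ, α ^ t * k ((yseq t).1, uF (yseq t))) ∈ Sset :=
        ⟨_, _, hAdm, rfl⟩
      have hile : sInf Sset ≤ ∑' t : ℕ, α ^ t * k ((yseq t).1, uF (yseq t)) :=
        csInf_le ⟨L α / (1 - α), hlb⟩ hmem
      calc (1 - α) * sInf Sset
          ≤ (1 - α) * ∑' t : ℕ, α ^ t * k ((yseq t).1, uF (yseq t)) :=
            mul_le_mul_of_nonneg_left hile (by linarith)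
        _ ≤ C := (key _ _ hAdm).2
  -- Step B : L tends to μ
  have hLtend : Tendsto L (𝓝[Set.Ioo (0:ℝ) 1] 1) (𝓝 μ) := by
    have hc : ContinuousAt L 1 := by
      apply ContinuousAt.sub continuousAt_const
      exact ContinuousAt.div (by fun_prop) continuousAt_id one_ne_zero
    have : Tendsto L (𝓝 (1:ℝ)) (𝓝 (L 1)) := hc
    have hL1 : L 1 = μ := by simp [hL_def]
    rw [hL1] at this
    exact this.mono_left nhdsWithin_le_nhds
  -- Step C : conclude via liminf monotonicity
  have hev : ∀ᶠ α in 𝓝[Set.Ioo (0:ℝ) 1] 1, L α ≤ hdisc Y U f k α y₀ := by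
    filter_upwards [eventually_mem_nhdsWithin] with α hα using (stepA α hα).1
  have hevU : ∀ᶠ α in 𝓝[Set.Ioo (0:ℝ) 1] 1, hdisc Y U f k α y₀ ≤ C := by
    filter_upwards [eventually_mem_nhdsWithin] with α hα using (stepA α hα).2
  have h1 : liminf L (𝓝[Set.Ioo (0:ℝ) 1] 1) = μ := hLtend.liminf_eq
  have h2 : liminf L (𝓝[Set.Ioo (0:ℝ) 1] 1) ≤
      liminf (fun α : ℝ => hdisc Y U f k α y₀) (𝓝[Set.Ioo (0:ℝ) 1] 1) := by
    refine liminf_le_liminf hev ?_ ?_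
    · exact hLtend.isBoundedUnder_ge
    · exact IsBoundedUnder.isCoboundedUnder_ge ⟨C, hevU⟩
  linarith [h1 ▸ h2]
end
end

section
/- For every integer T ≥ 1 and every γ ∈ W, ∫_G V_T(y) dγ(y,u) ≤ ∫_G k(y,u) dγ(y,u). (Here V_T is lower semicontinuous on Y, hence Borel measurable and bounded, so the left-hand integral is well defined.) -/
open MeasureTheory Filter Topology Set

noncomputable section

variable {m : ℕ} {U₀ : Type*} [MetricSpace U₀] [CompactSpace U₀]
  [MeasurableSpace U₀] [BorelSpace U₀]

namespace Stmt9Aux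
set_option linter.unusedSectionVars false
set_option linter.unusedVariables false

variable {m : ℕ} {U₀ : Type*} [MetricSpace U₀] [CompactSpace U₀]
  [MeasurableSpace U₀] [BorelSpace U₀]

/-- Unnormalized finite-horizon cost set. -/
def S (Y : Set (Fin m → ℝ)) (U : (Fin m → ℝ) → Set U₀)
    (f : (Fin m → ℝ) × U₀ → (Fin m → ℝ)) (k : (Fin m → ℝ) × U₀ → ℝ)
    (T : ℕ) (y₀ : Fin m → ℝ) : Set ℝ :=
  {c | ∃ y u, Admissible Y U f y₀ y u ∧ c = ∑ t ∈ Finset.range T, k (y t, u t)}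

/-- Unnormalized value function. -/
def Vn (Y : Set (Fin m → ℝ)) (U : (Fin m → ℝ) → Set U₀)
    (f : (Fin m → ℝ) × U₀ → (Fin m → ℝ)) (k : (Fin m → ℝ) × U₀ → ℝ)
    (T : ℕ) (y₀ : Fin m → ℝ) : ℝ :=
  sInf (S Y U f k T y₀)

section Basic

variable {Y : Set (Fin m → ℝ)} {U : (Fin m → ℝ) → Set U₀}
  {f : (Fin m → ℝ) × U₀ → (Fin m → ℝ)} {k : (Fin m → ℝ) × U₀ → ℝ}

theorem exists_adm (hA : ∀ y ∈ Y, ∃ u ∈ U y, f (y, u) ∈ Y) {y₀ : Fin m → ℝ}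
    (hy₀ : y₀ ∈ Y) : ∃ y u, Admissible Y U f y₀ y u := by
  classical
  have hne : Nonempty U₀ := ⟨(hA y₀ hy₀).choose⟩
  let ch : (Fin m → ℝ) → U₀ := fun y =>
    if h : y ∈ Y then (hA y h).choose else Classical.arbitrary U₀
  have hch : ∀ y ∈ Y, ch y ∈ U y ∧ f (y, ch y) ∈ Y := by
    intro y h
    simp only [ch, dif_pos h]
    exact ⟨(hA y h).choose_spec.1, (hA y h).choose_spec.2⟩
  let ys : ℕ → (Fin m → ℝ) := fun t => Nat.rec y₀ (fun _ y => f (y, ch y)) t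
  have hyY : ∀ t, ys t ∈ Y := by
    intro t
    induction t with
    | zero => exact hy₀
    | succ t ih => exact (hch _ ih).2
  exact ⟨ys, fun t => ch (ys t), rfl, fun t => ⟨(hch _ (hyY t)).1, hyY t, rfl⟩⟩

theorem S_nonempty (hA : ∀ y ∈ Y, ∃ u ∈ U y, f (y, u) ∈ Y) {y₀ : Fin m → ℝ}
    (hy₀ : y₀ ∈ Y) (T : ℕ) : (S Y U f k T y₀).Nonempty := by
  obtain ⟨y, u, hadm⟩ := exists_adm hA hy₀
  exact ⟨_, y, u, hadm, rfl⟩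

variable {C : ℝ}

theorem S_abs_le (hC : ∀ p : (Fin m → ℝ) × U₀, p.1 ∈ Y → |k p| ≤ C)
    {T : ℕ} {y₀ : Fin m → ℝ} {c : ℝ} (hc : c ∈ S Y U f k T y₀) : |c| ≤ T * C := by
  obtain ⟨y, u, hadm, rfl⟩ := hc
  calc |∑ t ∈ Finset.range T, k (y t, u t)| ≤ ∑ t ∈ Finset.range T, |k (y t, u t)| :=
        Finset.abs_sum_le_sum_abs _ _
    _ ≤ ∑ _t ∈ Finset.range T, C :=
        Finset.sum_le_sum fun t _ => hC _ (hadm.2 t).2.1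
    _ = T * C := by simp [mul_comm]

theorem S_bddBelow (hC : ∀ p : (Fin m → ℝ) × U₀, p.1 ∈ Y → |k p| ≤ C)
    {T : ℕ} {y₀ : Fin m → ℝ} : BddBelow (S Y U f k T y₀) :=
  ⟨-(T * C), fun c hc => neg_le_of_abs_le (S_abs_le hC hc)⟩

theorem Vn_abs_le (hA : ∀ y ∈ Y, ∃ u ∈ U y, f (y, u) ∈ Y)
    (hC : ∀ p : (Fin m → ℝ) × U₀, p.1 ∈ Y → |k p| ≤ C)
    {T : ℕ} {y₀ : Fin m → ℝ} (hy₀ : y₀ ∈ Y) : |Vn Y U f k T y₀| ≤ T * C := by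
  obtain ⟨c, hc⟩ := S_nonempty (k := k) hA hy₀ T
  have h1 : -(T * C) ≤ Vn Y U f k T y₀ :=
    le_csInf ⟨c, hc⟩ fun b hb => neg_le_of_abs_le (S_abs_le hC hb)
  have h2 : Vn Y U f k T y₀ ≤ T * C :=
    le_trans (csInf_le (S_bddBelow hC) hc) (le_of_abs_le (S_abs_le hC hc))
  exact abs_le.2 ⟨h1, h2⟩

theorem Vn_of_not_mem {T : ℕ} {y₀ : Fin m → ℝ} (hy₀ : y₀ ∉ Y) :
    Vn Y U f k T y₀ = 0 := by
  have : S Y U f k T y₀ = ∅ := by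
    ext c
    simp only [S, Set.mem_setOf_eq, Set.mem_empty_iff_false, iff_false, not_exists]
    rintro y u ⟨⟨h0, hadm⟩, -⟩
    exact hy₀ (h0 ▸ (hadm 0).2.1)
  rw [Vn, this, Real.sInf_empty]

theorem Vn_zero (hA : ∀ y ∈ Y, ∃ u ∈ U y, f (y, u) ∈ Y) {y₀ : Fin m → ℝ}
    (hy₀ : y₀ ∈ Y) : Vn Y U f k 0 y₀ = 0 := by
  have : S Y U f k 0 y₀ = {0} := by
    ext c
    simp only [S, Set.mem_setOf_eq, Set.mem_singleton_iff, Finset.range_zero,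
      Finset.sum_empty]
    constructor
    · rintro ⟨y, u, -, rfl⟩; rfl
    · rintro rfl
      obtain ⟨y, u, hadm⟩ := exists_adm hA hy₀
      exact ⟨y, u, hadm, rfl⟩
  rw [Vn, this, csInf_singleton]

end Basic

end Stmt9Aux
namespace Stmt9Aux
set_option linter.unusedSectionVars false
set_option linter.unusedVariables false

variable {m : ℕ} {U₀ : Type*} [MetricSpace U₀] [CompactSpace U₀]
  [MeasurableSpace U₀] [BorelSpace U₀]

section DPP

variable {Y : Set (Fin m → ℝ)} {U : (Fin m → ℝ) → Set U₀}
  {f : (Fin m → ℝ) × U₀ → (Fin m → ℝ)} {k : (Fin m → ℝ) × U₀ → ℝ} {C : ℝ}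

/-- Dynamic programming inequality. -/
theorem Vn_dpp_le (hA : ∀ y ∈ Y, ∃ u ∈ U y, f (y, u) ∈ Y)
    (hC : ∀ p : (Fin m → ℝ) × U₀, p.1 ∈ Y → |k p| ≤ C)
    {T : ℕ} {p : (Fin m → ℝ) × U₀} (hp : p ∈ Gset Y U f) :
    Vn Y U f k (T + 1) p.1 ≤ k p + Vn Y U f k T (f p) := by
  obtain ⟨hp1, hp2, hp3⟩ := hp
  have h1 : ∀ c ∈ S Y U f k T (f p), Vn Y U f k (T + 1) p.1 - k p ≤ c := by
    rintro c ⟨y, u, ⟨h0, hadm⟩, rfl⟩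
    set y' : ℕ → (Fin m → ℝ) := fun t => Nat.casesOn t p.1 y with hy'
    set u' : ℕ → U₀ := fun t => Nat.casesOn t p.2 u with hu'
    have hadm' : Admissible Y U f p.1 y' u' := by
      refine ⟨rfl, fun t => ?_⟩
      cases t with
      | zero =>
        refine ⟨hp2, hp1, ?_⟩
        show y 0 = f (p.1, p.2)
        rw [h0]
      | succ t => exact hadm t
    have hmem : (k p + ∑ t ∈ Finset.range T, k (y t, u t)) ∈ S Y U f k (T + 1) p.1 := by
      refine ⟨y', u', hadm', ?_⟩
      rw [Finset.sum_range_succ']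
      show k p + (∑ t ∈ Finset.range T, k (y t, u t)) =
        (∑ t ∈ Finset.range T, k (y t, u t)) + k p
      exact add_comm _ _
    have := csInf_le (S_bddBelow hC) hmem
    rw [Vn] at *
    linarith
  have hle : Vn Y U f k (T + 1) p.1 - k p ≤ Vn Y U f k T (f p) :=
    le_csInf (S_nonempty hA hp3 T) h1
  linarith

/-- The one-step value set. -/
def SliceSet (Y : Set (Fin m → ℝ)) (U : (Fin m → ℝ) → Set U₀)
    (f : (Fin m → ℝ) × U₀ → (Fin m → ℝ)) (g : (Fin m → ℝ) × U₀ → ℝ)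
    (y : Fin m → ℝ) : Set ℝ :=
  (fun u => g (y, u)) '' {u | (y, u) ∈ Gset Y U f}

/-- The one-step value function. -/
def Fn (Y : Set (Fin m → ℝ)) (U : (Fin m → ℝ) → Set U₀)
    (f : (Fin m → ℝ) × U₀ → (Fin m → ℝ)) (g : (Fin m → ℝ) × U₀ → ℝ)
    (y : Fin m → ℝ) : ℝ :=
  sInf (SliceSet Y U f g y)

theorem sliceSet_nonempty (hA : ∀ y ∈ Y, ∃ u ∈ U y, f (y, u) ∈ Y)
    {g : (Fin m → ℝ) × U₀ → ℝ} {y : Fin m → ℝ} (hy : y ∈ Y) :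
    (SliceSet Y U f g y).Nonempty := by
  obtain ⟨u, hu, hfu⟩ := hA y hy
  exact ⟨g (y, u), u, ⟨hy, hu, hfu⟩, rfl⟩

theorem sliceSet_bddBelow {g : (Fin m → ℝ) × U₀ → ℝ} {B : ℝ}
    (hB : ∀ p ∈ Gset Y U f, -B ≤ g p) {y : Fin m → ℝ} :
    BddBelow (SliceSet Y U f g y) := by
  refine ⟨-B, ?_⟩
  rintro c ⟨u, hu, rfl⟩
  exact hB _ hu

/-- `Vn (T+1)` agrees with the one-step `Fn` built from `Vn T`. -/
theorem Vn_succ_eq_Fn (hA : ∀ y ∈ Y, ∃ u ∈ U y, f (y, u) ∈ Y)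
    (hC : ∀ p : (Fin m → ℝ) × U₀, p.1 ∈ Y → |k p| ≤ C)
    {T : ℕ} {y : Fin m → ℝ} (hy : y ∈ Y) :
    Vn Y U f k (T + 1) y = Fn Y U f (fun p => k p + Vn Y U f k T (f p)) y := by
  have hB : ∀ p ∈ Gset Y U f, -(C + T * C) ≤ k p + Vn Y U f k T (f p) := by
    rintro p ⟨h1, h2, h3⟩
    have := hC p h1
    have := Vn_abs_le (k := k) hA hC (T := T) h3
    have h4 := abs_le.1 this
    have h5 := abs_le.1 (hC p h1)
    linarith
  apply le_antisymm
  · refine le_csInf (sliceSet_nonempty hA hy) ?_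
    rintro c ⟨u, hu, rfl⟩
    exact Vn_dpp_le hA hC hu
  · refine le_csInf (S_nonempty hA hy (T + 1)) ?_
    rintro c ⟨ys, us, ⟨h0, hadm⟩, rfl⟩
    have hu0 : (y, us 0) ∈ Gset Y U f := by
      refine ⟨hy, h0 ▸ (hadm 0).1, ?_⟩
      have h1 := (hadm 0).2.2
      have h2 := (hadm 1).2.1
      rw [h1] at h2
      rwa [h0] at h2
    have hFle : Fn Y U f (fun p => k p + Vn Y U f k T (f p)) y ≤
        k (y, us 0) + Vn Y U f k T (f (y, us 0)) :=
      csInf_le (sliceSet_bddBelow hB) ⟨us 0, hu0, rfl⟩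
    have htail : Vn Y U f k T (f (y, us 0)) ≤
        ∑ t ∈ Finset.range T, k (ys (t + 1), us (t + 1)) := by
      refine csInf_le (S_bddBelow hC) ⟨fun t => ys (t + 1), fun t => us (t + 1), ?_, rfl⟩
      refine ⟨?_, fun t => (hadm (t + 1))⟩
      have h2 := (hadm 0).2.2
      rw [h0] at h2
      exact h2
    have hsum : (∑ t ∈ Finset.range (T + 1), k (ys t, us t)) =
        k (ys 0, us 0) + ∑ t ∈ Finset.range T, k (ys (t + 1), us (t + 1)) := by
      rw [Finset.sum_range_succ']
      ring
    rw [hsum, h0]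
    linarith

end DPP

end Stmt9Aux
namespace Stmt9Aux
set_option linter.unusedSectionVars false
set_option linter.unusedVariables false

variable {m : ℕ} {U₀ : Type*} [MetricSpace U₀] [CompactSpace U₀]
  [MeasurableSpace U₀] [BorelSpace U₀]

/-- Sublevel sets of a function lsc on a closed set are closed. -/
theorem lscOn_sublevel {X : Type*} [TopologicalSpace X] {s : Set X} (hs : IsClosed s)
    {g : X → ℝ} (hg : LowerSemicontinuousOn g s) (c : ℝ) :
    IsClosed {x ∈ s | g x ≤ c} := by
  rw [← isOpen_compl_iff, isOpen_iff_mem_nhds]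
  intro x hx
  by_cases hxs : x ∈ s
  · have hc : c < g x := by
      by_contra h
      exact hx ⟨hxs, not_lt.mp h⟩
    have h := hg x hxs c hc
    rw [eventually_nhdsWithin_iff] at h
    refine h.mono fun z hz hmem => ?_
    exact absurd hmem.2 (not_le.mpr (hz hmem.1))
  · exact Filter.mem_of_superset (hs.isOpen_compl.mem_nhds hxs)
      fun z hz hmem => hz hmem.1

section LSC

variable {Y : Set (Fin m → ℝ)} {U : (Fin m → ℝ) → Set U₀}
  {f : (Fin m → ℝ) × U₀ → (Fin m → ℝ)} {k : (Fin m → ℝ) × U₀ → ℝ} {C : ℝ}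

theorem Gset_isClosed (hYcomp : IsCompact Y)
    (hUgraph : IsClosed {p : (Fin m → ℝ) × U₀ | p.1 ∈ Y ∧ p.2 ∈ U p.1})
    (hf : Continuous f) : IsClosed (Gset Y U f) := by
  have : Gset Y U f = {p : (Fin m → ℝ) × U₀ | p.1 ∈ Y ∧ p.2 ∈ U p.1} ∩ f ⁻¹' Y := by
    ext p; simp [Gset, and_assoc]
  rw [this]
  exact hUgraph.inter (hYcomp.isClosed.preimage hf)

theorem Gset_isCompact (hYcomp : IsCompact Y)
    (hUgraph : IsClosed {p : (Fin m → ℝ) × U₀ | p.1 ∈ Y ∧ p.2 ∈ U p.1})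
    (hf : Continuous f) : IsCompact (Gset Y U f) := by
  refine (hYcomp.prod isCompact_univ).of_isClosed_subset (Gset_isClosed hYcomp hUgraph hf) ?_
  rintro p ⟨h1, -, -⟩
  exact ⟨h1, Set.mem_univ _⟩

theorem Gset_mapsTo : Set.MapsTo f (Gset Y U f) Y := fun p hp => hp.2.2

theorem lscOn_comp_f (hf : Continuous f) {φ : (Fin m → ℝ) → ℝ}
    (hφ : LowerSemicontinuousOn φ Y) :
    LowerSemicontinuousOn (fun p => φ (f p)) (Gset Y U f) := by
  intro p hp c hc
  have h := hφ (f p) (Gset_mapsTo hp) c hc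
  have ht : Filter.Tendsto f (nhdsWithin p (Gset Y U f)) (nhdsWithin (f p) Y) :=
    hf.continuousWithinAt.tendsto_nhdsWithin Gset_mapsTo
  exact ht.eventually h

/-- Lower semicontinuity of the one-step infimum. -/
theorem lscOn_Fn (hYcomp : IsCompact Y)
    (hUgraph : IsClosed {p : (Fin m → ℝ) × U₀ | p.1 ∈ Y ∧ p.2 ∈ U p.1})
    (hf : Continuous f) (hA : ∀ y ∈ Y, ∃ u ∈ U y, f (y, u) ∈ Y)
    {g : (Fin m → ℝ) × U₀ → ℝ} (hg : LowerSemicontinuousOn g (Gset Y U f))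
    {B : ℝ} (hB : ∀ p ∈ Gset Y U f, -B ≤ g p) :
    LowerSemicontinuousOn (Fn Y U f g) Y := by
  intro x hx c hc
  set c' := (c + Fn Y U f g x) / 2 with hc'
  have hcc'₁ : c < c' := by rw [hc']; linarith
  have hcc'₂ : c' < Fn Y U f g x := by rw [hc']; linarith
  set K := {p ∈ Gset Y U f | g p ≤ c'} with hK
  have hKclosed : IsClosed K := lscOn_sublevel (Gset_isClosed hYcomp hUgraph hf) hg c'
  have hKcomp : IsCompact K :=
    (Gset_isCompact hYcomp hUgraph hf).of_isClosed_subset hKclosed fun p hp => hp.1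
  have hPcomp : IsCompact (Prod.fst '' K) := hKcomp.image continuous_fst
  have hxP : x ∉ Prod.fst '' K := by
    rintro ⟨p, ⟨hpG, hple⟩, rfl⟩
    have hmem : g p ∈ SliceSet Y U f g p.1 := ⟨p.2, hpG, rfl⟩
    have : Fn Y U f g p.1 ≤ g p := csInf_le (sliceSet_bddBelow hB) hmem
    linarith
  have hopen : (Prod.fst '' K)ᶜ ∈ nhds x :=
    hPcomp.isClosed.isOpen_compl.mem_nhds hxP
  have h1 : ∀ᶠ z in nhdsWithin x Y, z ∈ (Prod.fst '' K)ᶜ :=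
    Filter.Eventually.filter_mono nhdsWithin_le_nhds (Filter.eventually_iff_exists_mem.2
      ⟨_, hopen, fun z hz => hz⟩)
  filter_upwards [h1, self_mem_nhdsWithin] with z hz hzY
  have : c' ≤ Fn Y U f g z := by
    refine le_csInf (sliceSet_nonempty hA hzY) ?_
    rintro b ⟨u, hu, rfl⟩
    by_contra hlt
    exact hz ⟨(z, u), ⟨hu, le_of_not_ge hlt⟩, rfl⟩
  linarith

/-- `Vn T` is lower semicontinuous on `Y`. -/
theorem lscOn_Vn (hYcomp : IsCompact Y)
    (hUgraph : IsClosed {p : (Fin m → ℝ) × U₀ | p.1 ∈ Y ∧ p.2 ∈ U p.1})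
    (hf : Continuous f) (hk : Continuous k)
    (hA : ∀ y ∈ Y, ∃ u ∈ U y, f (y, u) ∈ Y)
    (hC : ∀ p : (Fin m → ℝ) × U₀, p.1 ∈ Y → |k p| ≤ C) (T : ℕ) :
    LowerSemicontinuousOn (Vn Y U f k T) Y := by
  induction T with
  | zero =>
    intro x hx c hc
    rw [Vn_zero hA hx] at hc
    filter_upwards [self_mem_nhdsWithin] with z hz
    rw [Vn_zero hA hz]
    exact hc
  | succ T ih =>
    have hg : LowerSemicontinuousOn (fun p => k p + Vn Y U f k T (f p)) (Gset Y U f) := by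
      refine LowerSemicontinuousOn.add ?_ (lscOn_comp_f hf ih)
      exact fun p hp => LowerSemicontinuousAt.lowerSemicontinuousWithinAt _ (hk.lowerSemicontinuous p)
    have hB : ∀ p ∈ Gset Y U f, -(C + T * C) ≤ k p + Vn Y U f k T (f p) := by
      rintro p ⟨h1, h2, h3⟩
      have h4 := abs_le.1 (Vn_abs_le (k := k) hA hC (T := T) h3)
      have h5 := abs_le.1 (hC p h1)
      linarith
    have hFn := lscOn_Fn hYcomp hUgraph hf hA hg hB
    intro x hx c hc
    rw [Vn_succ_eq_Fn hA hC hx] at hc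
    filter_upwards [hFn x hx c hc, self_mem_nhdsWithin] with z hz hzY
    rwa [Vn_succ_eq_Fn hA hC hzY]

/-- `Vn T` is Borel measurable. -/
theorem Vn_measurable (hYcomp : IsCompact Y)
    (hUgraph : IsClosed {p : (Fin m → ℝ) × U₀ | p.1 ∈ Y ∧ p.2 ∈ U p.1})
    (hf : Continuous f) (hk : Continuous k)
    (hA : ∀ y ∈ Y, ∃ u ∈ U y, f (y, u) ∈ Y)
    (hC : ∀ p : (Fin m → ℝ) × U₀, p.1 ∈ Y → |k p| ≤ C) (T : ℕ) :
    Measurable (Vn Y U f k T) := by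
  apply measurable_of_Iic
  intro c
  have h1 : IsClosed {y ∈ Y | Vn Y U f k T y ≤ c} :=
    lscOn_sublevel hYcomp.isClosed (lscOn_Vn hYcomp hUgraph hf hk hA hC T) c
  by_cases h0 : (0 : ℝ) ≤ c
  · have : Vn Y U f k T ⁻¹' Set.Iic c = {y ∈ Y | Vn Y U f k T y ≤ c} ∪ Yᶜ := by
      ext y
      simp only [Set.mem_preimage, Set.mem_Iic, Set.mem_union, Set.mem_setOf_eq,
        Set.mem_compl_iff]
      constructor
      · intro h
        by_cases hy : y ∈ Y
        · exact Or.inl ⟨hy, h⟩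
        · exact Or.inr hy
      · rintro (⟨-, h⟩ | hy)
        · exact h
        · rw [Vn_of_not_mem hy]; exact h0
    rw [this]
    exact h1.measurableSet.union hYcomp.isClosed.measurableSet.compl
  · have : Vn Y U f k T ⁻¹' Set.Iic c = {y ∈ Y | Vn Y U f k T y ≤ c} := by
      ext y
      simp only [Set.mem_preimage, Set.mem_Iic, Set.mem_setOf_eq]
      constructor
      · intro h
        by_cases hy : y ∈ Y
        · exact ⟨hy, h⟩
        · rw [Vn_of_not_mem hy] at h
          exact absurd h h0
      · exact fun h => h.2
    rw [this]
    exact h1.measurableSet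
  
end LSC

end Stmt9Aux
namespace Stmt9Aux
set_option linter.unusedSectionVars false
set_option linter.unusedVariables false

section MY

variable {m : ℕ}

/-- Moreau–Yosida approximation. -/
def MY (Y : Set (Fin m → ℝ)) (φ : (Fin m → ℝ) → ℝ) (n : ℕ) (x : Fin m → ℝ) : ℝ :=
  ⨅ z : Y, (φ z + n * dist x z)

variable {Y : Set (Fin m → ℝ)} {φ : (Fin m → ℝ) → ℝ} {B : ℝ}

theorem MY_bddBelow (hB : ∀ y ∈ Y, |φ y| ≤ B) (n : ℕ) (x : Fin m → ℝ) :
    BddBelow (Set.range fun z : Y => φ z + n * dist x z) := by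
  refine ⟨-B, ?_⟩
  rintro c ⟨z, rfl⟩
  show -B ≤ φ z + n * dist x z
  have h1 := abs_le.1 (hB z z.2)
  have h2 : (0 : ℝ) ≤ n * dist x (z : Fin m → ℝ) := by positivity
  linarith

theorem MY_le_self (hYne : Y.Nonempty) (hB : ∀ y ∈ Y, |φ y| ≤ B) (n : ℕ)
    {y : Fin m → ℝ} (hy : y ∈ Y) : MY Y φ n y ≤ φ y := by
  have := ciInf_le (MY_bddBelow hB n y) (⟨y, hy⟩ : Y)
  simp at this; exact this

theorem neg_le_MY (hYne : Y.Nonempty) (hB : ∀ y ∈ Y, |φ y| ≤ B) (n : ℕ)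
    (x : Fin m → ℝ) : -B ≤ MY Y φ n x := by
  haveI : Nonempty Y := hYne.to_subtype
  refine le_ciInf fun z => ?_
  have h1 := abs_le.1 (hB z z.2)
  have h2 : (0 : ℝ) ≤ n * dist x z := by positivity
  linarith

theorem MY_abs_le (hYne : Y.Nonempty) (hB : ∀ y ∈ Y, |φ y| ≤ B) (n : ℕ)
    {y : Fin m → ℝ} (hy : y ∈ Y) : |MY Y φ n y| ≤ B := by
  refine abs_le.2 ⟨neg_le_MY hYne hB n y, ?_⟩
  exact (MY_le_self hYne hB n hy).trans (le_of_abs_le (hB y hy))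

theorem MY_monotone (hYne : Y.Nonempty) (hB : ∀ y ∈ Y, |φ y| ≤ B) (x : Fin m → ℝ) :
    Monotone fun n : ℕ => MY Y φ n x := by
  haveI : Nonempty Y := hYne.to_subtype
  intro a b hab
  refine ciInf_mono (MY_bddBelow hB a x) fun z => ?_
  have : (a : ℝ) ≤ b := Nat.cast_le.2 hab
  have := mul_le_mul_of_nonneg_right this (dist_nonneg (x := x) (y := (z : Fin m → ℝ)))
  linarith

theorem MY_lipschitz_aux (hYne : Y.Nonempty) (hB : ∀ y ∈ Y, |φ y| ≤ B) (n : ℕ)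
    (x x' : Fin m → ℝ) : MY Y φ n x ≤ MY Y φ n x' + n * dist x x' := by
  haveI : Nonempty Y := hYne.to_subtype
  have h : ∀ z : Y, MY Y φ n x - n * dist x x' ≤ φ z + n * dist x' z := by
    intro z
    have h1 : MY Y φ n x ≤ φ z + n * dist x (z : Fin m → ℝ) :=
      ciInf_le (MY_bddBelow hB n x) z
    have h2 : dist x (z : Fin m → ℝ) ≤ dist x x' + dist x' z := dist_triangle _ _ _
    have h3 := mul_le_mul_of_nonneg_left h2 (by positivity : (0:ℝ) ≤ (n:ℝ))
    nlinarith
  have hfin : MY Y φ n x - n * dist x x' ≤ MY Y φ n x' := le_ciInf h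
  linarith

theorem MY_continuous (hYne : Y.Nonempty) (hB : ∀ y ∈ Y, |φ y| ≤ B) (n : ℕ) :
    Continuous (MY Y φ n) := by
  refine (LipschitzWith.of_dist_le_mul (K := (n : NNReal)) ?_).continuous
  intro x x'
  rw [Real.dist_eq, NNReal.coe_natCast]
  rw [abs_sub_le_iff]
  constructor
  · have := MY_lipschitz_aux hYne hB n x x'
    linarith
  · have := MY_lipschitz_aux hYne hB n x' x
    rw [dist_comm] at this
    linarith

theorem MY_tendsto (hYne : Y.Nonempty) (hB : ∀ y ∈ Y, |φ y| ≤ B)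
    (hlsc : LowerSemicontinuousOn φ Y) {y : Fin m → ℝ} (hy : y ∈ Y) :
    Filter.Tendsto (fun n : ℕ => MY Y φ n y) Filter.atTop (nhds (φ y)) := by
  haveI : Nonempty Y := hYne.to_subtype
  rw [tendsto_order]
  constructor
  · intro c hc
    set c' := (c + φ y) / 2 with hc'
    have hcc'₁ : c < c' := by rw [hc']; linarith
    have hcc'₂ : c' < φ y := by rw [hc']; linarith
    have h := hlsc y hy c' hcc'₂
    rw [Filter.eventually_iff, Metric.mem_nhdsWithin_iff] at h
    obtain ⟨δ, hδ, hball⟩ := h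
    obtain ⟨N, hN⟩ := exists_nat_ge ((c' + B) / δ)
    rw [Filter.eventually_atTop]
    refine ⟨N, fun n hn => ?_⟩
    have hkey : c' ≤ MY Y φ n y := by
      refine le_ciInf fun z => ?_
      by_cases hz : dist (z : Fin m → ℝ) y < δ
      · have hzball : (z : Fin m → ℝ) ∈ Metric.ball y δ ∩ Y := ⟨hz, z.2⟩
        have := hball hzball
        have h2 : (0:ℝ) ≤ n * dist y (z : Fin m → ℝ) := by positivity
        have : c' < φ z := this
        linarith
      · push_neg at hz
        have h1 := abs_le.1 (hB z z.2)
        have h2 : (N : ℝ) * δ ≤ n * dist y (z : Fin m → ℝ) := by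
          rw [dist_comm]
          have hNn : (N : ℝ) ≤ n := Nat.cast_le.2 hn
          nlinarith [dist_nonneg (x := (z : Fin m → ℝ)) (y := y)]
        have h3 : c' + B ≤ (N : ℝ) * δ := by
          rw [div_le_iff₀ hδ] at hN
          linarith
        linarith
    exact lt_of_lt_of_le hcc'₁ hkey
  · intro c hc
    refine Filter.Eventually.of_forall fun n => ?_
    exact lt_of_le_of_lt (MY_le_self hYne hB n hy) hc

end MY

end Stmt9Aux
namespace Stmt9Aux
set_option linter.unusedSectionVars false
set_option linter.unusedVariables false

open MeasureTheory Filter Topology Set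

variable {m : ℕ} {U₀ : Type*} [MetricSpace U₀] [CompactSpace U₀]
  [MeasurableSpace U₀] [BorelSpace U₀]

section Drift

variable {Y : Set (Fin m → ℝ)} {U : (Fin m → ℝ) → Set U₀}
  {f : (Fin m → ℝ) × U₀ → (Fin m → ℝ)}

/-- The zero-drift property extends to bounded lsc functions. -/
theorem drift_lsc (hYne : Y.Nonempty) (hf : Continuous f)
    {γ : Measure ((Fin m → ℝ) × U₀)} (hγ : γ ∈ Wset Y U f)
    {φ : (Fin m → ℝ) → ℝ} (hlsc : LowerSemicontinuousOn φ Y) (hφm : Measurable φ)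
    {B : ℝ} (hB : ∀ y ∈ Y, |φ y| ≤ B) :
    ∫ p, φ (f p) ∂γ = ∫ p, φ p.1 ∂γ := by
  obtain ⟨hprob, hG0, hdrift⟩ := hγ
  haveI := hprob
  have hae : ∀ᵐ p ∂γ, p ∈ Gset Y U f := by
    rw [MeasureTheory.ae_iff]
    exact hG0
  have hint : ∀ (g : (Fin m → ℝ) × U₀ → ℝ) (B' : ℝ), Measurable g →
      (∀ p ∈ Gset Y U f, |g p| ≤ B') → Integrable g γ := fun g B' hgm hgb =>
    ⟨hgm.aestronglyMeasurable, HasFiniteIntegral.of_bounded (C := B')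
      (hae.mono fun p hp => by simpa [Real.norm_eq_abs] using hgb p hp)⟩
  have hfm : Measurable f := hf.measurable
  have hint1 : ∀ n : ℕ, Integrable (fun p => MY Y φ n (f p)) γ := fun n =>
    hint _ B ((MY_continuous hYne hB n).measurable.comp hfm)
      fun p hp => MY_abs_le hYne hB n (Gset_mapsTo hp)
  have hint2 : ∀ n : ℕ, Integrable (fun p => MY Y φ n p.1) γ := fun n =>
    hint _ B ((MY_continuous hYne hB n).measurable.comp measurable_fst)
      fun p hp => MY_abs_le hYne hB n hp.1
  have hintF1 : Integrable (fun p => φ (f p)) γ :=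
    hint _ B (hφm.comp hfm) fun p hp => hB _ (Gset_mapsTo hp)
  have hintF2 : Integrable (fun p => φ p.1) γ :=
    hint _ B (hφm.comp measurable_fst) fun p hp => hB _ hp.1
  have ht1 : Tendsto (fun n : ℕ => ∫ p, MY Y φ n (f p) ∂γ) atTop
      (𝓝 (∫ p, φ (f p) ∂γ)) :=
    integral_tendsto_of_tendsto_of_monotone hint1 hintF1
      (Filter.Eventually.of_forall fun p => fun a b hab =>
        MY_monotone hYne hB (f p) hab)
      (hae.mono fun p hp => MY_tendsto hYne hB hlsc (Gset_mapsTo hp))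
  have ht2 : Tendsto (fun n : ℕ => ∫ p, MY Y φ n p.1 ∂γ) atTop
      (𝓝 (∫ p, φ p.1 ∂γ)) :=
    integral_tendsto_of_tendsto_of_monotone hint2 hintF2
      (Filter.Eventually.of_forall fun p => fun a b hab =>
        MY_monotone hYne hB p.1 hab)
      (hae.mono fun p hp => MY_tendsto hYne hB hlsc hp.1)
  have heq : (fun n : ℕ => ∫ p, MY Y φ n (f p) ∂γ) =
      fun n : ℕ => ∫ p, MY Y φ n p.1 ∂γ := by
    funext n
    have h := hdrift (MY Y φ n) (MY_continuous hYne hB n).continuousOn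
    rw [integral_sub (hint1 n) (hint2 n)] at h
    linarith
  rw [heq] at ht1
  exact tendsto_nhds_unique ht1 ht2

end Drift

end Stmt9Aux
open Pointwise Stmt9Aux in
theorem stmt_9
    (Y : Set (Fin m → ℝ)) (hYne : Y.Nonempty) (hYcomp : IsCompact Y)
    (U : (Fin m → ℝ) → Set U₀)
    (hUne : ∀ y ∈ Y, (U y).Nonempty) (hUcomp : ∀ y ∈ Y, IsCompact (U y))
    (hUgraph : IsClosed {p : (Fin m → ℝ) × U₀ | p.1 ∈ Y ∧ p.2 ∈ U p.1})
    (f : (Fin m → ℝ) × U₀ → (Fin m → ℝ)) (hf : Continuous f)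
    (k : (Fin m → ℝ) × U₀ → ℝ) (hk : Continuous k)
    (hA : ∀ y ∈ Y, ∃ u ∈ U y, f (y, u) ∈ Y) :
    ∀ T : ℕ, 1 ≤ T → ∀ γ ∈ Wset Y U f,
      ∫ p, VT Y U f k T p.1 ∂γ ≤ ∫ p, k p ∂γ := by
  -- a uniform bound on `k` over `Y × U₀`
  obtain ⟨C, hC0, hC⟩ : ∃ C : ℝ, 0 ≤ C ∧
      ∀ p : (Fin m → ℝ) × U₀, p.1 ∈ Y → |k p| ≤ C := by
    obtain ⟨C, hC⟩ :=
      (hYcomp.prod isCompact_univ).exists_bound_of_continuousOn hk.continuousOn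
    refine ⟨max C 0, le_max_right _ _, fun p hp => ?_⟩
    have := hC p ⟨hp, mem_univ _⟩
    rw [Real.norm_eq_abs] at this
    exact this.trans (le_max_left _ _)
  intro T hT γ hγ
  haveI : IsProbabilityMeasure γ := hγ.1
  have hae : ∀ᵐ p ∂γ, p ∈ Gset Y U f := by
    rw [MeasureTheory.ae_iff]
    exact hγ.2.1
  have hint : ∀ (g : (Fin m → ℝ) × U₀ → ℝ) (B' : ℝ), Measurable g →
      (∀ p ∈ Gset Y U f, |g p| ≤ B') → Integrable g γ := fun g B' hgm hgb =>
    ⟨hgm.aestronglyMeasurable, HasFiniteIntegral.of_bounded (C := B')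
      (hae.mono fun p hp => by simpa [Real.norm_eq_abs] using hgb p hp)⟩
  have hVnm : ∀ T' : ℕ, Measurable (Vn Y U f k T') :=
    Vn_measurable hYcomp hUgraph hf hk hA hC
  have hint1 : ∀ T' : ℕ, Integrable (fun p => Vn Y U f k T' p.1) γ := fun T' =>
    hint _ (T' * C) ((hVnm T').comp measurable_fst)
      fun p hp => Vn_abs_le hA hC hp.1
  have hint2 : ∀ T' : ℕ, Integrable (fun p => Vn Y U f k T' (f p)) γ := fun T' =>
    hint _ (T' * C) ((hVnm T').comp hf.measurable)
      fun p hp => Vn_abs_le hA hC (Gset_mapsTo hp)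
  have hintk : Integrable k γ := hint _ C hk.measurable fun p hp => hC p hp.1
  -- main induction
  have main : ∀ T' : ℕ, ∫ p, Vn Y U f k T' p.1 ∂γ ≤ T' * ∫ p, k p ∂γ := by
    intro T'
    induction T' with
    | zero =>
      have h0 : ∫ p, Vn Y U f k 0 p.1 ∂γ = 0 := by
        rw [← MeasureTheory.integral_zero ((Fin m → ℝ) × U₀) ℝ (μ := γ)]
        refine integral_congr_ae (hae.mono fun p hp => ?_)
        exact Vn_zero hA hp.1
      rw [h0]
      simp
    | succ T' ih =>
      have key : (fun p => Vn Y U f k (T' + 1) p.1) ≤ᵐ[γ]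
          fun p => k p + Vn Y U f k T' (f p) :=
        hae.mono fun p hp => Vn_dpp_le hA hC hp
      have hd : ∫ p, Vn Y U f k T' (f p) ∂γ = ∫ p, Vn Y U f k T' p.1 ∂γ :=
        drift_lsc hYne hf hγ (lscOn_Vn hYcomp hUgraph hf hk hA hC T')
          (hVnm T') (fun y hy => Vn_abs_le hA hC hy)
      calc ∫ p, Vn Y U f k (T' + 1) p.1 ∂γ
          ≤ ∫ p, (k p + Vn Y U f k T' (f p)) ∂γ :=
            integral_mono_ae (hint1 (T' + 1)) (hintk.add (hint2 T')) key
        _ = ∫ p, k p ∂γ + ∫ p, Vn Y U f k T' (f p) ∂γ :=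
            integral_add hintk (hint2 T')
        _ = ∫ p, k p ∂γ + ∫ p, Vn Y U f k T' p.1 ∂γ := by rw [hd]
        _ ≤ ∫ p, k p ∂γ + T' * ∫ p, k p ∂γ := by linarith
        _ = (T' + 1 : ℕ) * ∫ p, k p ∂γ := by push_cast; ring
  -- relate `VT` and `Vn`
  have hTpos : (0 : ℝ) < T := by exact_mod_cast hT
  have hTne : (T : ℝ) ≠ 0 := ne_of_gt hTpos
  have hVT : ∀ y, VT Y U f k T y = (T : ℝ)⁻¹ * Vn Y U f k T y := by
    intro y
    have hset : {c | ∃ ys us, Admissible Y U f y ys us ∧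
        c = (∑ t ∈ Finset.range T, k (ys t, us t)) / (T : ℝ)}
        = (fun x => (T : ℝ)⁻¹ * x) '' (S Y U f k T y) := by
      ext c
      constructor
      · rintro ⟨ys, us, hadm, rfl⟩
        exact ⟨_, ⟨ys, us, hadm, rfl⟩, (div_eq_inv_mul _ _).symm⟩
      · rintro ⟨x, ⟨ys, us, hadm, rfl⟩, rfl⟩
        exact ⟨ys, us, hadm, (div_eq_inv_mul _ _).symm⟩
    have himg : (fun x => (T : ℝ)⁻¹ * x) '' (S Y U f k T y)
        = (T : ℝ)⁻¹ • (S Y U f k T y) := by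
      rw [← Set.image_smul]
      simp [smul_eq_mul]
    rw [VT, Vn, hset, himg, Real.sInf_smul_of_nonneg (by positivity), smul_eq_mul]
  calc ∫ p, VT Y U f k T p.1 ∂γ
      = ∫ p, (T : ℝ)⁻¹ * Vn Y U f k T p.1 ∂γ := by simp only [hVT]
    _ = (T : ℝ)⁻¹ * ∫ p, Vn Y U f k T p.1 ∂γ := integral_const_mul _ _
    _ ≤ (T : ℝ)⁻¹ * (T * ∫ p, k p ∂γ) :=
        mul_le_mul_of_nonneg_left (main T) (by positivity)
    _ = ∫ p, k p ∂γ := by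
        rw [← mul_assoc, inv_mul_cancel₀ hTne, one_mul]
end
end

section
/- For every α ∈ (0,1) and every γ ∈ W, ∫_G h_α(y) dγ(y,u) ≤ ∫_G k(y,u) dγ(y,u). (Here h_α is lower semicontinuous on Y, hence Borel measurable and bounded, so the left-hand integral is well defined.) -/
open MeasureTheory Filter Topology Set

noncomputable section

variable {m : ℕ} {U₀ : Type*} [MetricSpace U₀] [CompactSpace U₀]
  [MeasurableSpace U₀] [BorelSpace U₀]

/-! ### Auxiliary development for `stmt_10` -/

namespace Stmt10Aux

open scoped ENNReal NNReal

set_option linter.unusedSectionVars false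

variable {m : ℕ} {U₀ : Type*} [MetricSpace U₀] [CompactSpace U₀]
  [MeasurableSpace U₀] [BorelSpace U₀]

variable (Y : Set (Fin m → ℝ)) (U : (Fin m → ℝ) → Set U₀)
  (f : (Fin m → ℝ) × U₀ → (Fin m → ℝ)) (k : (Fin m → ℝ) × U₀ → ℝ) (α : ℝ)

/-- The set of total discounted costs of admissible processes from `z`. -/
def costSet (z : Fin m → ℝ) : Set ℝ :=
  {c | ∃ y u, Admissible Y U f z y u ∧ c = ∑' t : ℕ, α ^ t * k (y t, u t)}

/-- The set of `T`-step discounted costs of admissible processes from `z`. -/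
def vset (T : ℕ) (z : Fin m → ℝ) : Set ℝ :=
  {c | ∃ y u, Admissible Y U f z y u ∧
    c = ∑ t ∈ Finset.range T, α ^ t * k (y t, u t)}

/-- The `T`-step discounted value function. -/
def vt (T : ℕ) (z : Fin m → ℝ) : ℝ := sInf (vset Y U f k α T z)

theorem hdisc_eq (z : Fin m → ℝ) :
    hdisc Y U f k α z = (1 - α) * sInf (costSet Y U f k α z) := rfl

/-- Bundled hypotheses. -/
structure Ctx (M : ℝ) : Prop where
  hYc : IsCompact Y
  hGc : IsCompact (Gset Y U f)
  hf : Continuous f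
  hk : Continuous k
  hz : ∀ z ∈ Y, ∃ y u, Admissible Y U f z y u
  h0 : (0:ℝ) < α
  h1 : α < 1
  hM : 0 ≤ M
  hkM : ∀ p : (Fin m → ℝ) × U₀, p.1 ∈ Y → |k p| ≤ M

variable {Y U f k α}

theorem exists_admissible (hYne : Y.Nonempty) (hUne : ∀ y ∈ Y, (U y).Nonempty)
    (hA : ∀ y ∈ Y, ∃ u ∈ U y, f (y, u) ∈ Y) :
    ∀ z ∈ Y, ∃ y u, Admissible Y U f z y u := by
  classical
  obtain ⟨b, hb⟩ := hYne
  obtain ⟨u₀, -⟩ := hUne b hb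
  set g : (Fin m → ℝ) → U₀ := fun y => if h : y ∈ Y then (hA y h).choose else u₀ with hg
  have hgmem : ∀ y, y ∈ Y → g y ∈ U y ∧ f (y, g y) ∈ Y := by
    intro y h
    simp only [hg, dif_pos h]
    exact ⟨(hA y h).choose_spec.1, (hA y h).choose_spec.2⟩
  intro z hz
  set yseq : ℕ → (Fin m → ℝ) := fun n => Nat.rec z (fun _ y => f (y, g y)) n with hyseq
  have hY : ∀ n, yseq n ∈ Y := by
    intro n
    induction n with
    | zero => exact hz
    | succ n ih => exact (hgmem _ ih).2
  exact ⟨yseq, fun n => g (yseq n), rfl, fun t => ⟨(hgmem _ (hY t)).1, hY t, rfl⟩⟩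

theorem exists_bound (hYcomp : IsCompact Y) (hk : Continuous k) :
    ∃ M : ℝ, 0 ≤ M ∧ ∀ p : (Fin m → ℝ) × U₀, p.1 ∈ Y → |k p| ≤ M := by
  have hc : IsCompact (Y ×ˢ (Set.univ : Set U₀)) := hYcomp.prod isCompact_univ
  obtain ⟨C, hC⟩ := hc.exists_bound_of_continuousOn hk.continuousOn
  refine ⟨max C 0, le_max_right _ _, fun p hp => ?_⟩
  calc |k p| = ‖k p‖ := rfl
    _ ≤ C := hC p ⟨hp, trivial⟩
    _ ≤ max C 0 := le_max_left _ _

theorem tsum_geom_bound {M : ℝ} (h0 : (0:ℝ) < α) (h1 : α < 1) {b : ℕ → ℝ}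
    (hb : ∀ t, |b t| ≤ M * α ^ t) :
    Summable b ∧ |∑' t, b t| ≤ M / (1 - α) := by
  have hg : Summable (fun t : ℕ => M * α ^ t) :=
    (summable_geometric_of_lt_one h0.le h1).mul_left M
  have habs : Summable (fun t => |b t|) :=
    Summable.of_nonneg_of_le (fun t => abs_nonneg _) hb hg
  have hsb : Summable b := habs.of_abs
  refine ⟨hsb, ?_⟩
  have hnorm : ‖∑' t, b t‖ ≤ ∑' t, ‖b t‖ :=
    norm_tsum_le_tsum_norm (by simpa only [Real.norm_eq_abs] using habs)
  simp only [Real.norm_eq_abs] at hnorm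
  calc |∑' t, b t| ≤ ∑' t, |b t| := hnorm
    _ ≤ ∑' t, M * α ^ t := Summable.tsum_le_tsum hb habs hg
    _ = M * (1 - α)⁻¹ := by rw [tsum_mul_left, tsum_geometric_of_lt_one h0.le h1]
    _ = M / (1 - α) := (div_eq_mul_inv _ _).symm

theorem le_add_mul_sInf {a x kp : ℝ} (h0 : 0 < a) {S : Set ℝ} (hne : S.Nonempty)
    (key : ∀ c ∈ S, x ≤ kp + a * c) : x ≤ kp + a * sInf S := by
  have h1 : (x - kp) / a ≤ sInf S :=
    le_csInf hne fun c hcS => (div_le_iff₀ h0).2 (by linarith [key c hcS])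
  have h2 := (div_le_iff₀ h0).1 h1
  linarith

section CtxFacts

theorem proc_in_G {z : Fin m → ℝ} {y : ℕ → Fin m → ℝ} {u : ℕ → U₀}
    (h : Admissible Y U f z y u) (t : ℕ) : (y t, u t) ∈ Gset Y U f := by
  refine ⟨(h.2 t).2.1, (h.2 t).1, ?_⟩
  rw [show f (y t, u t) = y (t + 1) from ((h.2 t).2.2).symm]
  exact (h.2 (t + 1)).2.1

variable {M : ℝ} (hc : Ctx Y U f k α M)
include hc

theorem proc_abs_le {z : Fin m → ℝ} {y : ℕ → Fin m → ℝ} {u : ℕ → U₀}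
    (h : Admissible Y U f z y u) (t : ℕ) :
    |α ^ t * k (y t, u t)| ≤ M * α ^ t := by
  have hy : y t ∈ Y := (h.2 t).2.1
  have hb := hc.hkM (y t, u t) hy
  calc |α ^ t * k (y t, u t)| = α ^ t * |k (y t, u t)| := by
        rw [abs_mul, abs_of_nonneg (pow_nonneg hc.h0.le t)]
    _ ≤ α ^ t * M := mul_le_mul_of_nonneg_left hb (pow_nonneg hc.h0.le t)
    _ = M * α ^ t := mul_comm _ _

theorem proc_summable {z : Fin m → ℝ} {y : ℕ → Fin m → ℝ} {u : ℕ → U₀}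
    (h : Admissible Y U f z y u) :
    Summable (fun t : ℕ => α ^ t * k (y t, u t)) ∧
      |∑' t : ℕ, α ^ t * k (y t, u t)| ≤ M / (1 - α) :=
  tsum_geom_bound hc.h0 hc.h1 (proc_abs_le hc h)

theorem proc_tail_bound {z : Fin m → ℝ} {y : ℕ → Fin m → ℝ} {u : ℕ → U₀}
    (h : Admissible Y U f z y u) (T : ℕ) :
    |∑' t : ℕ, α ^ (t + T) * k (y (t + T), u (t + T))| ≤ M * α ^ T / (1 - α) := by
  refine (tsum_geom_bound hc.h0 hc.h1 (M := M * α ^ T)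
    (b := fun t => α ^ (t + T) * k (y (t + T), u (t + T))) fun t => ?_).2
  calc |α ^ (t + T) * k (y (t + T), u (t + T))| ≤ M * α ^ (t + T) := proc_abs_le hc h (t + T)
    _ = M * α ^ T * α ^ t := by rw [pow_add]; ring

theorem partial_bound {z : Fin m → ℝ} {y : ℕ → Fin m → ℝ} {u : ℕ → U₀}
    (h : Admissible Y U f z y u) (T : ℕ) :
    |∑ t ∈ Finset.range T, α ^ t * k (y t, u t)| ≤ M / (1 - α) := by
  have hg : Summable (fun t : ℕ => M * α ^ t) :=
    (summable_geometric_of_lt_one hc.h0.le hc.h1).mul_left M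
  calc |∑ t ∈ Finset.range T, α ^ t * k (y t, u t)|
      ≤ ∑ t ∈ Finset.range T, |α ^ t * k (y t, u t)| := Finset.abs_sum_le_sum_abs _ _
    _ ≤ ∑ t ∈ Finset.range T, M * α ^ t :=
        Finset.sum_le_sum fun t _ => proc_abs_le hc h t
    _ ≤ ∑' t : ℕ, M * α ^ t :=
        Summable.sum_le_tsum _ (fun i _ => mul_nonneg hc.hM (pow_nonneg hc.h0.le i)) hg
    _ = M * (1 - α)⁻¹ := by rw [tsum_mul_left, tsum_geometric_of_lt_one hc.h0.le hc.h1]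
    _ = M / (1 - α) := (div_eq_mul_inv _ _).symm

theorem costSet_mem_bound {z : Fin m → ℝ} {c : ℝ} (hcc : c ∈ costSet Y U f k α z) :
    |c| ≤ M / (1 - α) := by
  obtain ⟨y, u, h, rfl⟩ := hcc
  exact (proc_summable hc h).2

theorem vset_mem_bound {T : ℕ} {z : Fin m → ℝ} {c : ℝ} (hcc : c ∈ vset Y U f k α T z) :
    |c| ≤ M / (1 - α) := by
  obtain ⟨y, u, h, rfl⟩ := hcc
  exact partial_bound hc h T

theorem costSet_bddBelow (z : Fin m → ℝ) : BddBelow (costSet Y U f k α z) :=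
  ⟨-(M / (1 - α)), fun c hcc => neg_le_of_abs_le (costSet_mem_bound hc hcc)⟩

theorem vset_bddBelow (T : ℕ) (z : Fin m → ℝ) : BddBelow (vset Y U f k α T z) :=
  ⟨-(M / (1 - α)), fun c hcc => neg_le_of_abs_le (vset_mem_bound hc hcc)⟩

theorem costSet_nonempty {z : Fin m → ℝ} (hz : z ∈ Y) : (costSet Y U f k α z).Nonempty := by
  obtain ⟨y, u, h⟩ := hc.hz z hz
  exact ⟨_, y, u, h, rfl⟩

theorem vset_nonempty {z : Fin m → ℝ} (hz : z ∈ Y) (T : ℕ) :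
    (vset Y U f k α T z).Nonempty := by
  obtain ⟨y, u, h⟩ := hc.hz z hz
  exact ⟨_, y, u, h, rfl⟩

theorem abs_sInf_costSet_le {z : Fin m → ℝ} (hz : z ∈ Y) :
    |sInf (costSet Y U f k α z)| ≤ M / (1 - α) := by
  obtain ⟨c, hcc⟩ := costSet_nonempty hc hz
  refine abs_le.2 ⟨le_csInf ⟨c, hcc⟩ fun b hb => (abs_le.1 (costSet_mem_bound hc hb)).1, ?_⟩
  exact csInf_le_of_le (costSet_bddBelow hc z) hcc (abs_le.1 (costSet_mem_bound hc hcc)).2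

theorem abs_vt_le {z : Fin m → ℝ} (hz : z ∈ Y) (T : ℕ) :
    |vt Y U f k α T z| ≤ M / (1 - α) := by
  obtain ⟨c, hcc⟩ := vset_nonempty hc hz T
  refine abs_le.2 ⟨le_csInf ⟨c, hcc⟩ fun b hb => (abs_le.1 (vset_mem_bound hc hb)).1, ?_⟩
  exact csInf_le_of_le (vset_bddBelow hc T z) hcc (abs_le.1 (vset_mem_bound hc hcc)).2

theorem admissible_cons {p : (Fin m → ℝ) × U₀} (hp : p ∈ Gset Y U f)
    {y : ℕ → Fin m → ℝ} {u : ℕ → U₀} (h : Admissible Y U f (f p) y u) :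
    Admissible Y U f p.1 (fun n => Nat.casesOn n p.1 y) (fun n => Nat.casesOn n p.2 u) := by
  refine ⟨rfl, fun t => ?_⟩
  cases t with
  | zero => exact ⟨hp.2.1, hp.1, by simp [h.1]⟩
  | succ t => exact h.2 t

theorem sInf_costSet_le {p : (Fin m → ℝ) × U₀} (hp : p ∈ Gset Y U f) :
    sInf (costSet Y U f k α p.1) ≤ k p + α * sInf (costSet Y U f k α (f p)) := by
  refine le_add_mul_sInf hc.h0 (costSet_nonempty hc hp.2.2) ?_
  rintro c ⟨y, u, h, rfl⟩
  have hadm := admissible_cons hc hp h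
  have hs2 := (proc_summable hc hadm).1
  have hval : (∑' t : ℕ, α ^ t *
      k ((fun n => Nat.casesOn n p.1 y : ℕ → Fin m → ℝ) t, (fun n => Nat.casesOn n p.2 u : ℕ → U₀) t))
      = k p + α * ∑' t : ℕ, α ^ t * k (y t, u t) := by
    rw [Summable.tsum_eq_zero_add hs2]
    congr 1
    · show α ^ 0 * k (p.1, p.2) = k p
      simp
    · rw [← tsum_mul_left]
      refine tsum_congr fun t => ?_
      show α ^ (t + 1) * k (y t, u t) = α * (α ^ t * k (y t, u t))
      ring
  rw [← hval]
  exact csInf_le (costSet_bddBelow hc _) ⟨_, _, hadm, rfl⟩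

theorem vt_succ_le {p : (Fin m → ℝ) × U₀} (hp : p ∈ Gset Y U f) (T : ℕ) :
    vt Y U f k α (T + 1) p.1 ≤ k p + α * vt Y U f k α T (f p) := by
  refine le_add_mul_sInf hc.h0 (vset_nonempty hc hp.2.2 T) ?_
  rintro c ⟨y, u, h, rfl⟩
  have hadm := admissible_cons hc hp h
  have hval : (∑ t ∈ Finset.range (T + 1), α ^ t *
      k ((fun n => Nat.casesOn n p.1 y : ℕ → Fin m → ℝ) t, (fun n => Nat.casesOn n p.2 u : ℕ → U₀) t))
      = k p + α * ∑ t ∈ Finset.range T, α ^ t * k (y t, u t) := by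
    rw [Finset.sum_range_succ', Finset.mul_sum, add_comm]
    congr 1
    · show α ^ 0 * k (p.1, p.2) = k p
      simp
    · refine Finset.sum_congr rfl fun t _ => ?_
      show α ^ (t + 1) * k (y t, u t) = α * (α ^ t * k (y t, u t))
      ring
  rw [← hval]
  exact csInf_le (vset_bddBelow hc _ _) ⟨_, _, hadm, rfl⟩

theorem exists_u_lt {T : ℕ} {z : Fin m → ℝ} (hz : z ∈ Y) {c : ℝ}
    (hlt : vt Y U f k α (T + 1) z < c) :
    ∃ u₀ : U₀, (z, u₀) ∈ Gset Y U f ∧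
      k (z, u₀) + α * vt Y U f k α T (f (z, u₀)) < c := by
  obtain ⟨e, he, hec⟩ := exists_lt_of_csInf_lt (vset_nonempty hc hz (T + 1)) hlt
  obtain ⟨y, u, h, rfl⟩ := he
  have hz0 : y 0 = z := h.1
  refine ⟨u 0, ?_, ?_⟩
  · have := proc_in_G h 0
    rwa [hz0] at this
  · have hshift : Admissible Y U f (y 1) (fun n => y (n + 1)) (fun n => u (n + 1)) :=
      ⟨rfl, fun t => h.2 (t + 1)⟩
    have hv : vt Y U f k α T (y 1) ≤ ∑ t ∈ Finset.range T, α ^ t * k (y (t + 1), u (t + 1)) :=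
      csInf_le (vset_bddBelow hc _ _) ⟨_, _, hshift, rfl⟩
    have hsum : ∑ t ∈ Finset.range (T + 1), α ^ t * k (y t, u t)
        = k (y 0, u 0) + α * ∑ t ∈ Finset.range T, α ^ t * k (y (t + 1), u (t + 1)) := by
      rw [Finset.sum_range_succ', Finset.mul_sum, add_comm]
      congr 1
      · show α ^ 0 * k (y 0, u 0) = k (y 0, u 0)
        simp
      · refine Finset.sum_congr rfl fun t _ => ?_
        ring
    have hf1 : f (z, u 0) = y 1 := by
      rw [← hz0]
      exact ((h.2 0).2.2).symm
    rw [hz0] at hsum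
    calc k (z, u 0) + α * vt Y U f k α T (f (z, u 0))
        ≤ k (z, u 0) + α * ∑ t ∈ Finset.range T, α ^ t * k (y (t + 1), u (t + 1)) := by
          rw [hf1]
          exact add_le_add_right (mul_le_mul_of_nonneg_left hv hc.h0.le) _
      _ < c := by rw [← hsum]; exact hec

end CtxFacts

section CtxFacts2

variable {M : ℝ} (hc : Ctx Y U f k α M)
include hc

theorem vt_zero {z : Fin m → ℝ} (hz : z ∈ Y) : vt Y U f k α 0 z = 0 := by
  have hset : vset Y U f k α 0 z = {0} := by
    ext c
    constructor
    · rintro ⟨y, u, h, rfl⟩; simp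
    · rintro rfl
      obtain ⟨y, u, h⟩ := hc.hz z hz
      exact ⟨y, u, h, by simp⟩
  rw [vt, hset, csInf_singleton]

theorem vt_seq_lsc (T : ℕ) {z : ℕ → Fin m → ℝ} {z' : Fin m → ℝ} {c : ℕ → ℝ} {c' : ℝ}
    (hzY : ∀ n, z n ∈ Y) (hz : Tendsto z atTop (𝓝 z'))
    (hcv : Tendsto c atTop (𝓝 c')) (hle : ∀ n, vt Y U f k α T (z n) ≤ c n) :
    vt Y U f k α T z' ≤ c' := by
  induction T generalizing z z' c c' with
  | zero =>
    have hz' : z' ∈ Y := hc.hYc.isClosed.mem_of_tendsto hz (Filter.Eventually.of_forall hzY)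
    rw [vt_zero hc hz']
    have h0 : ∀ n, (0:ℝ) ≤ c n := fun n => (vt_zero hc (hzY n)) ▸ hle n
    exact ge_of_tendsto hcv (Filter.Eventually.of_forall h0)
  | succ T ih =>
    have hsel : ∀ n : ℕ, ∃ u₀ : U₀, (z n, u₀) ∈ Gset Y U f ∧
        k (z n, u₀) + α * vt Y U f k α T (f (z n, u₀)) < c n + 1/(n+1) := by
      intro n
      refine exists_u_lt hc (hzY n) ?_
      have hpos : (0:ℝ) < 1/((n:ℝ)+1) := by positivity
      linarith [hle n]
    choose v hvG hvlt using hsel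
    obtain ⟨p, hpG, φ, hφ, hconv⟩ := hc.hGc.tendsto_subseq (x := fun n => (z n, v n)) hvG
    have hφt : Tendsto φ atTop atTop := hφ.tendsto_atTop
    have hz1 : Tendsto (fun n => z (φ n)) atTop (𝓝 p.1) := (continuous_fst.tendsto p).comp hconv
    have hzp : p.1 = z' := tendsto_nhds_unique hz1 (hz.comp hφt)
    have hwY : ∀ n, f (z (φ n), v (φ n)) ∈ Y := fun n => (hvG (φ n)).2.2
    have hw : Tendsto (fun n => f (z (φ n), v (φ n))) atTop (𝓝 (f p)) :=
      (hc.hf.tendsto p).comp hconv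
    have hkp : Tendsto (fun n => k (z (φ n), v (φ n))) atTop (𝓝 (k p)) :=
      (hc.hk.tendsto p).comp hconv
    have hone : Tendsto (fun n : ℕ => 1/((φ n : ℝ)+1)) atTop (𝓝 0) := by
      refine squeeze_zero (fun n => by positivity) (fun n => ?_)
        tendsto_one_div_add_atTop_nhds_zero_nat
      refine one_div_le_one_div_of_le (by positivity) ?_
      have := hφ.le_apply (x := n)
      exact_mod_cast add_le_add_left (Nat.cast_le.2 this) 1
    have hcφ : Tendsto (fun n => c (φ n)) atTop (𝓝 c') := hcv.comp hφt
    have hr : Tendsto (fun n => (c (φ n) + 1/((φ n : ℝ)+1) - k (z (φ n), v (φ n))) / α) atTop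
        (𝓝 ((c' + 0 - k p) / α)) := ((hcφ.add hone).sub hkp).div_const α
    have hrle : ∀ n, vt Y U f k α T (f (z (φ n), v (φ n))) ≤
        (c (φ n) + 1/((φ n : ℝ)+1) - k (z (φ n), v (φ n))) / α := by
      intro n
      have h1 := hvlt (φ n)
      rw [le_div_iff₀ hc.h0]
      nlinarith [h1]
    have hih : vt Y U f k α T (f p) ≤ (c' + 0 - k p) / α := ih hwY hw hr hrle
    have hB := vt_succ_le hc hpG T
    rw [hzp] at hB
    have h2 : vt Y U f k α T (f p) * α ≤ c' + 0 - k p := (le_div_iff₀ hc.h0).1 hih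
    nlinarith [h2]

theorem vt_sublevel_closed (T : ℕ) (c : ℝ) :
    IsClosed {x | x ∈ Y ∧ vt Y U f k α T x ≤ c} := by
  refine IsSeqClosed.isClosed ?_
  intro x p hx hxp
  exact ⟨hc.hYc.isClosed.mem_of_tendsto hxp (.of_forall fun n => (hx n).1),
    vt_seq_lsc hc T (fun n => (hx n).1) hxp tendsto_const_nhds (fun n => (hx n).2)⟩

theorem indicator_vt_measurable (T : ℕ) :
    Measurable (Y.indicator (vt Y U f k α T)) := by
  apply measurable_of_Iio
  intro r
  have hpre : Y.indicator (vt Y U f k α T) ⁻¹' Set.Iio r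
      = {x | x ∈ Y ∧ vt Y U f k α T x < r} ∪ {x | x ∉ Y ∧ (0:ℝ) < r} := by
    ext x
    by_cases hx : x ∈ Y <;>
      simp [Set.indicator_of_mem, Set.indicator_of_notMem, hx]
  rw [hpre]
  have h1 : {x | x ∈ Y ∧ vt Y U f k α T x < r}
      = ⋃ n : ℕ, {x | x ∈ Y ∧ vt Y U f k α T x ≤ r - 1/((n:ℝ)+1)} := by
    ext x
    simp only [Set.mem_setOf_eq, Set.mem_iUnion]
    constructor
    · rintro ⟨hxY, hlt⟩
      obtain ⟨n, hn⟩ := exists_nat_one_div_lt (sub_pos.2 hlt)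
      exact ⟨n, hxY, by linarith⟩
    · rintro ⟨n, hxY, hle⟩
      have hpos : (0:ℝ) < 1/((n:ℝ)+1) := by positivity
      exact ⟨hxY, by linarith⟩
  refine MeasurableSet.union ?_ ?_
  · rw [h1]
    exact MeasurableSet.iUnion fun n => (vt_sublevel_closed hc T _).measurableSet
  · by_cases hr : (0:ℝ) < r
    · have he : {x : Fin m → ℝ | x ∉ Y ∧ (0:ℝ) < r} = Yᶜ := by ext x; simp [hr]
      rw [he]; exact hc.hYc.isClosed.measurableSet.compl
    · have he : {x : Fin m → ℝ | x ∉ Y ∧ (0:ℝ) < r} = ∅ := by ext x; simp [hr]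
      rw [he]; exact MeasurableSet.empty

theorem vt_approx {z : Fin m → ℝ} (hz : z ∈ Y) (T : ℕ) :
    |sInf (costSet Y U f k α z) - vt Y U f k α T z| ≤ M * α ^ T / (1 - α) := by
  have h1 : sInf (costSet Y U f k α z) - M * α ^ T / (1 - α) ≤ vt Y U f k α T z := by
    refine le_csInf (vset_nonempty hc hz T) ?_
    rintro e ⟨y, u, h, rfl⟩
    have hs := (proc_summable hc h).1
    have hsplit := Summable.sum_add_tsum_nat_add T hs
    have htail := abs_le.1 (proc_tail_bound hc h T)
    have hle : sInf (costSet Y U f k α z) ≤ ∑' t : ℕ, α ^ t * k (y t, u t) :=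
      csInf_le (costSet_bddBelow hc z) ⟨_, _, h, rfl⟩
    linarith [htail.1, htail.2]
  have h2 : vt Y U f k α T z - M * α ^ T / (1 - α) ≤ sInf (costSet Y U f k α z) := by
    refine le_csInf (costSet_nonempty hc hz) ?_
    rintro e ⟨y, u, h, rfl⟩
    have hs := (proc_summable hc h).1
    have hsplit := Summable.sum_add_tsum_nat_add T hs
    have htail := abs_le.1 (proc_tail_bound hc h T)
    have hvle : vt Y U f k α T z ≤ ∑ t ∈ Finset.range T, α ^ t * k (y t, u t) :=
      csInf_le (vset_bddBelow hc T z) ⟨_, _, h, rfl⟩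
    linarith [htail.1, htail.2]
  rw [abs_le]
  constructor <;> linarith

theorem tendsto_vt {z : Fin m → ℝ} (hz : z ∈ Y) :
    Tendsto (fun T => vt Y U f k α T z) atTop (𝓝 (sInf (costSet Y U f k α z))) := by
  have hb : Tendsto (fun T : ℕ => M * α ^ T / (1 - α)) atTop (𝓝 0) := by
    have hp := tendsto_pow_atTop_nhds_zero_of_lt_one hc.h0.le hc.h1
    have := (hp.const_mul M).div_const (1 - α)
    simpa using this
  have hd : Tendsto (fun T => dist (vt Y U f k α T z) (sInf (costSet Y U f k α z)))
      atTop (𝓝 0) := by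
    refine squeeze_zero (fun T => dist_nonneg) (fun T => ?_) hb
    rw [Real.dist_eq, abs_sub_comm]
    exact vt_approx hc hz T
  exact tendsto_iff_dist_tendsto_zero.2 hd

theorem measurable_H : Measurable (Y.indicator (hdisc Y U f k α)) := by
  have hlim : ∀ x, Tendsto (fun T => (1 - α) * Y.indicator (vt Y U f k α T) x) atTop
      (𝓝 (Y.indicator (hdisc Y U f k α) x)) := by
    intro x
    by_cases hx : x ∈ Y
    · simp only [Set.indicator_of_mem hx]
      rw [hdisc_eq]
      exact (tendsto_vt hc hx).const_mul _
    · simp only [Set.indicator_of_notMem hx, mul_zero]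
      exact tendsto_const_nhds
  exact measurable_of_tendsto_metrizable
    (fun T => (indicator_vt_measurable hc T).const_mul _) (tendsto_pi_nhds.2 hlim)

theorem abs_H_le (x : Fin m → ℝ) : |Y.indicator (hdisc Y U f k α) x| ≤ M := by
  by_cases hx : x ∈ Y
  · have h1α : (0:ℝ) < 1 - α := by linarith [hc.h1]
    rw [Set.indicator_of_mem hx, hdisc_eq, abs_mul, abs_of_nonneg h1α.le]
    calc (1-α) * |sInf (costSet Y U f k α x)| ≤ (1-α) * (M / (1-α)) :=
          mul_le_mul_of_nonneg_left (abs_sInf_costSet_le hc hx) h1α.le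
      _ = M := by field_simp
  · rw [Set.indicator_of_notMem hx, abs_zero]; exact hc.hM

theorem hdisc_bellman {p : (Fin m → ℝ) × U₀} (hp : p ∈ Gset Y U f) :
    hdisc Y U f k α p.1 ≤ (1 - α) * k p + α * hdisc Y U f k α (f p) := by
  rw [hdisc_eq, hdisc_eq]
  have h1α : (0:ℝ) ≤ 1 - α := by linarith [hc.h1]
  calc (1 - α) * sInf (costSet Y U f k α p.1)
      ≤ (1 - α) * (k p + α * sInf (costSet Y U f k α (f p))) :=
        mul_le_mul_of_nonneg_left (sInf_costSet_le hc hp) h1α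
    _ = (1 - α) * k p + α * ((1 - α) * sInf (costSet Y U f k α (f p))) := by ring

end CtxFacts2

section MeasurePart

theorem map_fst_eq_map_f {γ : Measure ((Fin m → ℝ) × U₀)}
    (hfc : Continuous f) (hγ : γ ∈ Wset Y U f) :
    γ.map Prod.fst = γ.map f := by
  have hprob : IsProbabilityMeasure γ := hγ.1
  have hmf : Measurable f := hfc.measurable
  have hfin : IsFiniteMeasure (γ.map Prod.fst) := by
    haveI := Measure.isProbabilityMeasure_map (measurable_fst.aemeasurable (μ := γ))
    infer_instance
  refine ext_of_forall_lintegral_eq_of_IsFiniteMeasure ?_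
  intro g
  have hgc : Continuous fun x : Fin m → ℝ => (g x : ℝ) :=
    NNReal.continuous_coe.comp g.continuous
  obtain ⟨C, hC⟩ := g.bounded
  have hbnd : ∀ x : Fin m → ℝ, ‖(g x : ℝ)‖ ≤ (g 0 : ℝ) + C := by
    intro x
    have h1 : |(g x : ℝ) - (g 0 : ℝ)| ≤ C := by
      rw [← NNReal.dist_eq]
      exact hC x 0
    have h2 := abs_le.1 h1
    rw [Real.norm_eq_abs, NNReal.abs_eq]
    linarith
  have hb1 : ∀ p : (Fin m → ℝ) × U₀, ‖(g (f p) : ℝ)‖ ≤ (g 0 : ℝ) + C := fun p => hbnd (f p)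
  have hb2 : ∀ p : (Fin m → ℝ) × U₀, ‖(g p.1 : ℝ)‖ ≤ (g 0 : ℝ) + C := fun p => hbnd p.1
  have hint1 : Integrable (fun p : (Fin m → ℝ) × U₀ => (g (f p) : ℝ)) γ :=
    Integrable.mono' (integrable_const _) ((hgc.comp hfc).aestronglyMeasurable)
      (Filter.Eventually.of_forall hb1)
  have hint2 : Integrable (fun p : (Fin m → ℝ) × U₀ => (g p.1 : ℝ)) γ :=
    Integrable.mono' (integrable_const _) ((hgc.comp continuous_fst).aestronglyMeasurable)
      (Filter.Eventually.of_forall hb2)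
  have hW := hγ.2.2 (fun x => (g x : ℝ)) hgc.continuousOn
  rw [integral_sub hint1 hint2, sub_eq_zero] at hW
  have hmg : Measurable fun x : Fin m → ℝ => (g x : ℝ≥0∞) :=
    measurable_coe_nnreal_ennreal.comp g.continuous.measurable
  rw [lintegral_map hmg measurable_fst, lintegral_map hmg hmf]
  have e1 : ENNReal.ofReal (∫ p, (g (f p) : ℝ) ∂γ) = ∫⁻ p, ((g (f p) : ℝ≥0) : ℝ≥0∞) ∂γ := by
    rw [ofReal_integral_eq_lintegral_ofReal hint1
      (Filter.Eventually.of_forall fun p => (g (f p)).coe_nonneg)]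
    simp_rw [ENNReal.ofReal_coe_nnreal]
  have e2 : ENNReal.ofReal (∫ p, (g p.1 : ℝ) ∂γ) = ∫⁻ p, ((g p.1 : ℝ≥0) : ℝ≥0∞) ∂γ := by
    rw [ofReal_integral_eq_lintegral_ofReal hint2
      (Filter.Eventually.of_forall fun p => (g p.1).coe_nonneg)]
    simp_rw [ENNReal.ofReal_coe_nnreal]
  calc ∫⁻ p, ((g p.1 : ℝ≥0) : ℝ≥0∞) ∂γ
      = ENNReal.ofReal (∫ p, (g p.1 : ℝ) ∂γ) := e2.symm
    _ = ENNReal.ofReal (∫ p, (g (f p) : ℝ) ∂γ) := by rw [hW]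
    _ = ∫⁻ p, ((g (f p) : ℝ≥0) : ℝ≥0∞) ∂γ := e1

end MeasurePart

end Stmt10Aux

theorem stmt_10
    (Y : Set (Fin m → ℝ)) (hYne : Y.Nonempty) (hYcomp : IsCompact Y)
    (U : (Fin m → ℝ) → Set U₀)
    (hUne : ∀ y ∈ Y, (U y).Nonempty) (hUcomp : ∀ y ∈ Y, IsCompact (U y))
    (hUgraph : IsClosed {p : (Fin m → ℝ) × U₀ | p.1 ∈ Y ∧ p.2 ∈ U p.1})
    (f : (Fin m → ℝ) × U₀ → (Fin m → ℝ)) (hf : Continuous f)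
    (k : (Fin m → ℝ) × U₀ → ℝ) (hk : Continuous k)
    (hA : ∀ y ∈ Y, ∃ u ∈ U y, f (y, u) ∈ Y) :
    ∀ α ∈ Set.Ioo (0 : ℝ) 1, ∀ γ ∈ Wset Y U f,
      ∫ p, hdisc Y U f k α p.1 ∂γ ≤ ∫ p, k p ∂γ := by
  intro α hα γ hγ
  classical
  obtain ⟨M, hM0, hkM⟩ := Stmt10Aux.exists_bound hYcomp hk
  have hGclosed : IsClosed (Gset Y U f) := by
    have h2 : IsClosed (f ⁻¹' Y) := hYcomp.isClosed.preimage hf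
    have hGeq : Gset Y U f = {p : (Fin m → ℝ) × U₀ | p.1 ∈ Y ∧ p.2 ∈ U p.1} ∩ f ⁻¹' Y := by
      ext p
      simp [Gset, Set.mem_setOf_eq, and_assoc]
    rw [hGeq]
    exact hUgraph.inter h2
  have hGc : IsCompact (Gset Y U f) :=
    (hYcomp.prod isCompact_univ).of_isClosed_subset hGclosed fun p hp => ⟨hp.1, trivial⟩
  have hc : Stmt10Aux.Ctx Y U f k α M :=
    ⟨hYcomp, hGc, hf, hk, Stmt10Aux.exists_admissible hYne hUne hA, hα.1, hα.2, hM0, hkM⟩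
  haveI hprob : IsProbabilityMeasure γ := hγ.1
  set H := Y.indicator (hdisc Y U f k α) with hH
  have hHmeas : Measurable H := Stmt10Aux.measurable_H hc
  have hHb : ∀ x, |H x| ≤ M := Stmt10Aux.abs_H_le hc
  have haeG : ∀ᵐ p ∂γ, p ∈ Gset Y U f := by
    rw [MeasureTheory.ae_iff]
    exact hγ.2.1
  have hmf : Measurable f := hf.measurable
  have hint_H1 : Integrable (fun p : (Fin m → ℝ) × U₀ => H p.1) γ :=
    Integrable.mono' (integrable_const M) (hHmeas.comp measurable_fst).aestronglyMeasurable
      (.of_forall fun p => by simpa [Real.norm_eq_abs] using hHb p.1)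
  have hint_H2 : Integrable (fun p : (Fin m → ℝ) × U₀ => H (f p)) γ :=
    Integrable.mono' (integrable_const M) (hHmeas.comp hmf).aestronglyMeasurable
      (.of_forall fun p => by simpa [Real.norm_eq_abs] using hHb (f p))
  have hint_k : Integrable k γ :=
    Integrable.mono' (integrable_const M) hk.aestronglyMeasurable
      (haeG.mono fun p hp => by simpa [Real.norm_eq_abs] using hkM p hp.1)
  have hae_eq : (fun p : (Fin m → ℝ) × U₀ => hdisc Y U f k α p.1) =ᵐ[γ] fun p => H p.1 :=
    haeG.mono fun p hp => (Set.indicator_of_mem hp.1 _).symm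
  rw [integral_congr_ae hae_eq]
  have hmapeq : γ.map Prod.fst = γ.map f := Stmt10Aux.map_fst_eq_map_f hf hγ
  have hswap : ∫ p, H (f p) ∂γ = ∫ p, H p.1 ∂γ := by
    rw [← integral_map hmf.aemeasurable hHmeas.aestronglyMeasurable,
      ← integral_map measurable_fst.aemeasurable hHmeas.aestronglyMeasurable, hmapeq]
  have hineq : ∫ p, H p.1 ∂γ ≤ ∫ p, ((1 - α) * k p + α * H (f p)) ∂γ := by
    refine integral_mono_ae hint_H1 ((hint_k.const_mul _).add (hint_H2.const_mul _)) ?_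
    refine haeG.mono fun p hp => ?_
    show H p.1 ≤ (1 - α) * k p + α * H (f p)
    have h1 : H p.1 = hdisc Y U f k α p.1 := Set.indicator_of_mem hp.1 _
    have h2 : H (f p) = hdisc Y U f k α (f p) := Set.indicator_of_mem hp.2.2 _
    rw [h1, h2]
    exact Stmt10Aux.hdisc_bellman hc hp
  rw [integral_add (hint_k.const_mul _) (hint_H2.const_mul _), integral_const_mul,
    integral_const_mul, hswap] at hineq
  have h1α : (0:ℝ) < 1 - α := by linarith [hα.2]
  nlinarith [hineq, h1α]
end
end
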